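/- arXiv:0903.0258 — 5 statements merged into one kernel-verified Lean document; each statement's English description precedes it below -/
import Mathlib

section
/- Let F be an injective cellular automaton on finite configurations in dimension d. Then the linearization F̃ of F is uniformly local if and only if F is reversible. -/
open scoped Pointwise ComplexConjugate
open Classical

noncomputable section

variable (d : ℕ) (A : Type) (q : A)

/-- Finite configurations over `ℤ^d`. -/
def Cf : Type := {c : (Fin d → ℤ) → A // {i | c i ≠ q}.Finite}

/-- Restrictions to `S` of finite configurations. -/
def Rst (S : Set (Fin d → ℤ)) : Type := {u : S → A // {i | u i ≠ q}.Finite}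

variable {d A q}

def restr (S : Set (Fin d → ℤ)) (c : Cf d A q) : Rst d A q S :=
  ⟨fun i => c.1 i, c.2.preimage Subtype.val_injective.injOn⟩

def glue {S : Set (Fin d → ℤ)} (u : Rst d A q S) (v : Rst d A q Sᶜ) : Cf d A q :=
  ⟨fun i => if h : i ∈ S then u.1 ⟨i, h⟩ else v.1 ⟨i, h⟩, by
    apply Set.Finite.subset ((u.2.image Subtype.val).union (v.2.image Subtype.val))
    intro i hi
    by_cases h : i ∈ S
    · exact Or.inl ⟨⟨i, h⟩, by simpa [h] using hi, rfl⟩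
    · exact Or.inr ⟨⟨i, h⟩, by simpa [h] using hi, rfl⟩⟩

/-- The Hilbert space `ℓ²(C_f, ℂ)`. -/
abbrev Hd (d : ℕ) (A : Type) (q : A) : Type := lp (fun _ : Cf d A q => ℂ) 2

/-- Canonical basis vector. -/
def e (c : Cf d A q) : Hd d A q := lp.single 2 c 1

/-- A state: countable convex combination of an orthonormal family of pure states. -/
structure State (H : Type) [NormedAddCommGroup H] [InnerProductSpace ℂ H] where
  ψ : ℕ → H
  p : ℕ → ℝ
  nonneg : ∀ k, 0 ≤ p k
  sum_one : HasSum p 1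
  ortho : ∀ j k, p j ≠ 0 → p k ≠ 0 → (inner ℂ (ψ j) (ψ k) : ℂ) = if j = k then 1 else 0

/-- Reduction to `S` of the mixture of the family `ψ` with weights `p`. -/
def redFam (p : ℕ → ℝ) (ψ : ℕ → Hd d A q) (S : Set (Fin d → ℤ)) :
    Rst d A q S → Rst d A q S → ℂ := fun u u' =>
  ∑' k, (p k : ℂ) * ∑' v : Rst d A q Sᶜ, (ψ k) (glue u v) * conj ((ψ k) (glue u' v))

def reduct (ρ : State (Hd d A q)) (S : Set (Fin d → ℤ)) :
    Rst d A q S → Rst d A q S → ℂ := redFam ρ.p ρ.ψ S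

def redApply (G : Hd d A q →L[ℂ] Hd d A q) (ρ : State (Hd d A q)) (S : Set (Fin d → ℤ)) :
    Rst d A q S → Rst d A q S → ℂ := redFam ρ.p (fun k => G (ρ.ψ k)) S

/-- `G` is local at `𝒜` with neighbourhood `𝒩`. -/
def LocalAt (G : Hd d A q →L[ℂ] Hd d A q) (𝒜 𝒩 : Set (Fin d → ℤ)) : Prop :=
  ∀ ρ ρ' : State (Hd d A q), reduct ρ (𝒜 + 𝒩) = reduct ρ' (𝒜 + 𝒩) →
    redApply G ρ 𝒜 = redApply G ρ' 𝒜

/-- `F` is a cellular automaton. -/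
def IsCA (F : Cf d A q → Cf d A q) : Prop :=
  ∃ (N : Set (Fin d → ℤ)) (_ : N.Finite) (f : (N → A) → A),
    f (fun _ => q) = q ∧ ∀ c i, (F c).1 i = f (fun n => c.1 (i + n.1))

/-- `F` is reversible. -/
def Reversible (F : Cf d A q → Cf d A q) : Prop :=
  ∃ NI : Set (Fin d → ℤ), NI.Finite ∧ ∀ x y : Cf d A q, ∀ i : Fin d → ℤ,
    (∀ n ∈ NI, (F x).1 (i + n) = (F y).1 (i + n)) → x.1 i = y.1 i


section Aux

lemma Cf.ext' {x y : Cf d A q} (h : ∀ i, x.1 i = y.1 i) : x = y := Subtype.ext (funext h)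

lemma Rst.ext' {S : Set (Fin d → ℤ)} {u u' : Rst d A q S} (h : ∀ i, u.1 i = u'.1 i) : u = u' :=
  Subtype.ext (funext h)

lemma restr_apply (S : Set (Fin d → ℤ)) (c : Cf d A q) (i : S) : (restr S c).1 i = c.1 i := rfl

lemma glue_apply_mem {S : Set (Fin d → ℤ)} (u : Rst d A q S) (v : Rst d A q Sᶜ)
    {i : Fin d → ℤ} (h : i ∈ S) : (glue u v).1 i = u.1 ⟨i, h⟩ := dif_pos h

lemma glue_apply_not_mem {S : Set (Fin d → ℤ)} (u : Rst d A q S) (v : Rst d A q Sᶜ)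
    {i : Fin d → ℤ} (h : i ∉ S) : (glue u v).1 i = v.1 ⟨i, h⟩ := dif_neg h

lemma restr_glue (S : Set (Fin d → ℤ)) (u : Rst d A q S) (v : Rst d A q Sᶜ) :
    restr S (glue u v) = u := by
  apply Rst.ext'; intro i
  rw [restr_apply, glue_apply_mem u v i.2]

lemma restr_compl_glue (S : Set (Fin d → ℤ)) (u : Rst d A q S) (v : Rst d A q Sᶜ) :
    restr Sᶜ (glue u v) = v := by
  apply Rst.ext'; intro i
  rw [restr_apply, glue_apply_not_mem u v i.2]

lemma glue_restr (S : Set (Fin d → ℤ)) (c : Cf d A q) :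
    glue (restr S c) (restr Sᶜ c) = c := by
  apply Cf.ext'; intro i
  by_cases h : i ∈ S
  · rw [glue_apply_mem _ _ h]; rfl
  · rw [glue_apply_not_mem _ _ h]; rfl

lemma glue_eq_iff {S : Set (Fin d → ℤ)} {u : Rst d A q S} {v : Rst d A q Sᶜ} {c : Cf d A q} :
    glue u v = c ↔ restr S c = u ∧ restr Sᶜ c = v := by
  constructor
  · rintro rfl; exact ⟨restr_glue S u v, restr_compl_glue S u v⟩
  · rintro ⟨rfl, rfl⟩; exact glue_restr S c

lemma glue_right_injective {S : Set (Fin d → ℤ)} (u : Rst d A q S) :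
    Function.Injective (fun v : Rst d A q Sᶜ => glue u v) := by
  intro v v' h
  have := congrArg (restr Sᶜ) h
  rwa [restr_compl_glue, restr_compl_glue] at this

lemma glue_inj_parts {S : Set (Fin d → ℤ)} {w w' : Rst d A q S} {v v' : Rst d A q Sᶜ}
    (h : glue w v = glue w' v') : w = w' ∧ v = v' := by
  constructor
  · rw [← restr_glue S w v, h, restr_glue]
  · rw [← restr_compl_glue S w v, h, restr_compl_glue]

lemma eq_of_restr_eq {S : Set (Fin d → ℤ)} {x y : Cf d A q}
    (h1 : restr S x = restr S y) (h2 : restr Sᶜ x = restr Sᶜ y) : x = y := by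
  rw [← glue_restr S x, h1, h2, glue_restr]

instance finiteRst {S : Set (Fin d → ℤ)} [Finite A] [Finite S] : Finite (Rst d A q S) := by
  unfold Rst
  infer_instance

end Aux


section HilbAux

variable {d : ℕ} {A : Type} {q : A}

lemma e_apply (c c' : Cf d A q) : (e c : Hd d A q) c' = if c' = c then 1 else 0 := by
  rw [e, lp.single_apply]
  by_cases h : c' = c
  · rw [if_pos h]; subst h; simp [Pi.single_apply]
  · rw [if_neg h]; simp [Pi.single_apply, h]

lemma two_toReal : (ENNReal.toReal 2) = ((2 : ℕ) : ℝ) := by norm_num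

lemma summable_sq (ψ : Hd d A q) : Summable (fun c => ‖ψ c‖ ^ 2) := by
  have := (memℓp_gen_iff (by rw [two_toReal]; norm_num)).1 (lp.memℓp ψ)
  convert this using 2 with c
  rw [two_toReal, Real.rpow_natCast]

lemma tsum_sq_eq (ψ : Hd d A q) : ∑' c, ‖ψ c‖ ^ 2 = ‖ψ‖ ^ 2 := by
  have := lp.norm_rpow_eq_tsum (p := 2) (by rw [two_toReal]; norm_num) ψ
  simp only [two_toReal, Real.rpow_natCast] at this
  rw [this]

lemma summable_sq_comp {ι : Type*} (ψ : Hd d A q) (j : ι → Cf d A q)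
    (hj : Function.Injective j) : Summable (fun t => ‖ψ (j t)‖ ^ 2) :=
  (summable_sq ψ).comp_injective hj

lemma tsum_sq_comp_le {ι : Type*} (ψ : Hd d A q) (j : ι → Cf d A q)
    (hj : Function.Injective j) : ∑' t, ‖ψ (j t)‖ ^ 2 ≤ ‖ψ‖ ^ 2 := by
  rw [← tsum_sq_eq ψ]
  exact Summable.tsum_le_tsum_of_inj j hj (fun c _ => sq_nonneg _) (fun t => le_rfl)
    (summable_sq_comp ψ j hj) (summable_sq ψ)

lemma norm_mul_conj_le (ψ φ : Hd d A q) (c c' : Cf d A q) :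
    ‖ψ c * conj (φ c')‖ ≤ (‖ψ c‖ ^ 2 + ‖φ c'‖ ^ 2) / 2 := by
  rw [norm_mul, RCLike.norm_conj]
  nlinarith [norm_nonneg (ψ c), norm_nonneg (φ c'), sq_nonneg (‖ψ c‖ - ‖φ c'‖)]

lemma summable_mul_conj {ι : Type*} (ψ φ : Hd d A q) (j₁ j₂ : ι → Cf d A q)
    (h₁ : Function.Injective j₁) (h₂ : Function.Injective j₂) :
    Summable (fun t => ψ (j₁ t) * conj (φ (j₂ t))) := by
  apply Summable.of_norm
  apply Summable.of_nonneg_of_le (fun t => norm_nonneg _) (fun t => norm_mul_conj_le ψ φ _ _)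
  exact (((summable_sq_comp ψ j₁ h₁).add (summable_sq_comp φ j₂ h₂)).div_const 2)

lemma norm_tsum_mul_conj_le {ι : Type*} (ψ φ : Hd d A q) (j₁ j₂ : ι → Cf d A q)
    (h₁ : Function.Injective j₁) (h₂ : Function.Injective j₂) :
    ‖∑' t, ψ (j₁ t) * conj (φ (j₂ t))‖ ≤ (‖ψ‖ ^ 2 + ‖φ‖ ^ 2) / 2 := by
  have hsum := summable_mul_conj ψ φ j₁ j₂ h₁ h₂
  have hmaj := ((summable_sq_comp ψ j₁ h₁).add (summable_sq_comp φ j₂ h₂)).div_const 2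
  refine (norm_tsum_le_tsum_norm hsum.norm).trans ?_
  refine (Summable.tsum_le_tsum (fun t => norm_mul_conj_le ψ φ _ _) hsum.norm hmaj).trans ?_
  rw [tsum_div_const, Summable.tsum_add (summable_sq_comp ψ j₁ h₁) (summable_sq_comp φ j₂ h₂)]
  have A := tsum_sq_comp_le ψ j₁ h₁
  have B := tsum_sq_comp_le φ j₂ h₂
  linarith

end HilbAux
section Gformula

variable {d : ℕ} {A : Type} {q : A} {F : Cf d A q → Cf d A q}
  {G : Hd d A q →L[ℂ] Hd d A q}

lemma G_hasSum (hG : ∀ c, G (e c) = e (F c)) (ψ : Hd d A q) (c' : Cf d A q) :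
    HasSum (fun c => ψ c * (if c' = F c then (1 : ℂ) else 0)) ((G ψ) c') := by
  classical
  have h1 : HasSum (fun c => lp.single 2 c (ψ c)) ψ := lp.hasSum_single (by norm_num) ψ
  have h2 : HasSum (fun c => G (lp.single 2 c (ψ c))) (G ψ) := h1.mapL G
  have h3 : (fun c : Cf d A q => G (lp.single 2 c (ψ c))) = fun c => ψ c • e (F c) := by
    funext c
    have hsingle : lp.single 2 c (ψ c) = ψ c • (e c) := by
      rw [e, ← lp.single_smul, smul_eq_mul, mul_one]
    rw [hsingle, map_smul, hG]
  rw [h3] at h2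
  have h4 := h2.mapL (innerSL ℂ (e c'))
  have h5 : (innerSL ℂ (e c')) (G ψ) = (G ψ) c' := by
    simp only [innerSL_apply_apply, e]
    rw [lp.inner_single_left, RCLike.inner_apply, map_one, mul_one]
  have h6 : (fun c : Cf d A q => (innerSL ℂ (e c')) (ψ c • e (F c)))
      = fun c => ψ c * (if c' = F c then (1 : ℂ) else 0) := by
    funext c
    simp only [innerSL_apply_apply, inner_smul_right]
    congr 1
    rw [e, lp.inner_single_left, RCLike.inner_apply, map_one, mul_one]
    exact e_apply (F c) c'
  rw [h5, h6] at h4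
  exact h4

lemma G_apply_F (hG : ∀ c, G (e c) = e (F c)) (hinj : Function.Injective F)
    (ψ : Hd d A q) (x : Cf d A q) : (G ψ) (F x) = ψ x := by
  classical
  have h := G_hasSum hG ψ (F x)
  have heq : (fun c : Cf d A q => ψ c * (if F x = F c then (1 : ℂ) else 0))
      = fun c => if c = x then ψ x else 0 := by
    funext c
    by_cases hc : c = x
    · subst hc; rw [if_pos rfl, if_pos rfl, mul_one]
    · rw [if_neg hc, if_neg (fun hfc => hc (hinj hfc.symm)), mul_zero]
  rw [heq] at h
  exact h.unique (hasSum_ite_eq x (ψ x))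

lemma G_apply_not_range (hG : ∀ c, G (e c) = e (F c)) (ψ : Hd d A q) {c' : Cf d A q}
    (h : c' ∉ Set.range F) : (G ψ) c' = 0 := by
  classical
  have hs := G_hasSum hG ψ c'
  have heq : (fun c : Cf d A q => ψ c * (if c' = F c then (1 : ℂ) else 0))
      = fun _ => (0 : ℂ) := by
    funext c
    rw [if_neg (fun hc => h ⟨c, hc.symm⟩), mul_zero]
  rw [heq] at hs
  exact hs.unique hasSum_zero

end Gformula

section Indicator

variable {d : ℕ} {A : Type} {q : A}

lemma conj_ite (P : Prop) [Decidable P] : conj (if P then (1 : ℂ) else 0) = if P then 1 else 0 := by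
  split_ifs <;> simp

lemma tsum_e_mul_conj (S : Set (Fin d → ℤ)) (x y : Cf d A q) (u u' : Rst d A q S) :
    ∑' v : Rst d A q Sᶜ, (e x : Hd d A q) (glue u v) * conj ((e y : Hd d A q) (glue u' v))
    = if restr S x = u ∧ restr S y = u' ∧ restr Sᶜ x = restr Sᶜ y then 1 else 0 := by
  classical
  have hterm : ∀ v : Rst d A q Sᶜ,
      (e x : Hd d A q) (glue u v) * conj ((e y : Hd d A q) (glue u' v))
      = if (glue u v = x ∧ glue u' v = y) then 1 else 0 := by
    intro v
    rw [e_apply, e_apply, conj_ite]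
    by_cases h1 : glue u v = x <;> by_cases h2 : glue u' v = y <;>
      simp [h1, h2]
  rw [tsum_congr hterm]
  by_cases hmain : restr S x = u ∧ restr S y = u' ∧ restr Sᶜ x = restr Sᶜ y
  · obtain ⟨hxu, hyu, hxy⟩ := hmain
    rw [if_pos ⟨hxu, hyu, hxy⟩]
    have hone : ∀ v' : Rst d A q Sᶜ, v' ≠ restr Sᶜ x →
        (if (glue u v' = x ∧ glue u' v' = y) then (1 : ℂ) else 0) = 0 := by
      intro v' hv'
      rw [if_neg]
      rintro ⟨h1, _⟩
      exact hv' (glue_eq_iff.1 h1).2.symm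
    rw [tsum_eq_single (restr Sᶜ x) hone, if_pos]
    constructor
    · exact glue_eq_iff.2 ⟨hxu, rfl⟩
    · exact glue_eq_iff.2 ⟨hyu, hxy.symm⟩
  · rw [if_neg hmain]
    have : ∀ v : Rst d A q Sᶜ, (if (glue u v = x ∧ glue u' v = y) then (1 : ℂ) else 0) = 0 := by
      intro v
      rw [if_neg]
      rintro ⟨h1, h2⟩
      obtain ⟨hxu, hxv⟩ := glue_eq_iff.1 h1
      obtain ⟨hyu, hyv⟩ := glue_eq_iff.1 h2
      exact hmain ⟨hxu, hyu, by rw [hxv, hyv]⟩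
    rw [tsum_congr this, tsum_zero]

end Indicator
section States

variable {d : ℕ} {A : Type} {q : A}

lemma inner_e_left (x : Cf d A q) (f : Hd d A q) : (inner ℂ (e x) f : ℂ) = f x := by
  classical
  rw [e, lp.inner_single_left, RCLike.inner_apply, map_one, mul_one]

lemma inner_e_self (x : Cf d A q) : (inner ℂ (e x) (e x) : ℂ) = 1 := by
  rw [inner_e_left, e_apply, if_pos rfl]

lemma inner_e_ne {x y : Cf d A q} (h : x ≠ y) : (inner ℂ (e x) (e y) : ℂ) = 0 := by
  rw [inner_e_left, e_apply, if_neg h]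

/-- The pure state given by a unit vector. -/
def pureState (φ : Hd d A q) (hφ : (inner ℂ φ φ : ℂ) = 1) : State (Hd d A q) where
  ψ := fun k => if k = 0 then φ else 0
  p := fun k => if k = 0 then 1 else 0
  nonneg := by intro k; split_ifs <;> norm_num
  sum_one := hasSum_ite_eq 0 1
  ortho := by
    intro j k hj hk
    have hj0 : j = 0 := by by_contra h; exact hj (if_neg h)
    have hk0 : k = 0 := by by_contra h; exact hk (if_neg h)
    subst hj0; subst hk0
    simpa using hφ

lemma pureState_redFam (φ : Hd d A q) (hφ : (inner ℂ φ φ : ℂ) = 1)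
    (ψ' : Hd d A q → Hd d A q) (hlin : ψ' 0 = 0) (S : Set (Fin d → ℤ)) (u u' : Rst d A q S) :
    redFam (pureState φ hφ).p (fun k => ψ' ((pureState φ hφ).ψ k)) S u u'
    = ∑' v : Rst d A q Sᶜ, (ψ' φ) (glue u v) * conj ((ψ' φ) (glue u' v)) := by
  classical
  rw [redFam]
  rw [tsum_eq_single 0]
  · simp [pureState]
  · intro k hk
    simp [pureState, if_neg hk]

/-- The 50/50 mixture of two orthonormal vectors. -/
def mixState (φ₀ φ₁ : Hd d A q) (h00 : (inner ℂ φ₀ φ₀ : ℂ) = 1) (h11 : (inner ℂ φ₁ φ₁ : ℂ) = 1)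
    (h01 : (inner ℂ φ₀ φ₁ : ℂ) = 0) : State (Hd d A q) where
  ψ := fun k => if k = 0 then φ₀ else if k = 1 then φ₁ else 0
  p := fun k => if k = 0 then 1/2 else if k = 1 then 1/2 else 0
  nonneg := by intro k; split_ifs <;> norm_num
  sum_one := by
    have h : (fun k : ℕ => if k = 0 then (1/2 : ℝ) else if k = 1 then 1/2 else 0)
        = fun k => (if k = 0 then (1/2 : ℝ) else 0) + (if k = 1 then (1/2 : ℝ) else 0) := by
      funext k
      rcases eq_or_ne k 0 with rfl | h0
      · norm_num
      · rcases eq_or_ne k 1 with rfl | h1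
        · norm_num
        · simp [h0, h1]
    rw [h]
    convert (hasSum_ite_eq 0 (1/2 : ℝ)).add (hasSum_ite_eq 1 (1/2 : ℝ)) using 1
    norm_num
  ortho := by
    intro j k hj hk
    have h10 : (inner ℂ φ₁ φ₀ : ℂ) = 0 := by
      rw [← inner_conj_symm, h01, map_zero]
    have hj01 : j = 0 ∨ j = 1 := by
      by_contra h
      push_neg at h
      exact hj (by simp [h.1, h.2])
    have hk01 : k = 0 ∨ k = 1 := by
      by_contra h
      push_neg at h
      exact hk (by simp [h.1, h.2])
    rcases hj01 with rfl | rfl <;> rcases hk01 with rfl | rfl <;>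
      simp [-inner_self_eq_norm_sq_to_K, h00, h11, h01, h10]

lemma mixState_redFam (φ₀ φ₁ : Hd d A q) (h00 : (inner ℂ φ₀ φ₀ : ℂ) = 1)
    (h11 : (inner ℂ φ₁ φ₁ : ℂ) = 1) (h01 : (inner ℂ φ₀ φ₁ : ℂ) = 0)
    (ψ' : Hd d A q → Hd d A q) (hlin : ψ' 0 = 0) (S : Set (Fin d → ℤ)) (u u' : Rst d A q S) :
    redFam (mixState φ₀ φ₁ h00 h11 h01).p (fun k => ψ' ((mixState φ₀ φ₁ h00 h11 h01).ψ k)) S u u'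
    = (1/2 : ℂ) * (∑' v : Rst d A q Sᶜ, (ψ' φ₀) (glue u v) * conj ((ψ' φ₀) (glue u' v)))
    + (1/2 : ℂ) * (∑' v : Rst d A q Sᶜ, (ψ' φ₁) (glue u v) * conj ((ψ' φ₁) (glue u' v))) := by
  classical
  rw [redFam]
  rw [tsum_eq_sum (s := ({0, 1} : Finset ℕ)) ?_]
  · rw [Finset.sum_insert (by norm_num), Finset.sum_singleton]
    simp [mixState]
  · intro k hk
    simp only [Finset.mem_insert, Finset.mem_singleton, not_or] at hk
    simp [mixState, hk.1, hk.2]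

lemma tsum_comb_mul_conj (S : Set (Fin d → ℤ)) (x y x' y' : Cf d A q) (a b a' b' : ℂ)
    (u u' : Rst d A q S) :
    ∑' v : Rst d A q Sᶜ,
      (a * (e x : Hd d A q) (glue u v) + b * (e y : Hd d A q) (glue u v))
      * conj (a' * (e x' : Hd d A q) (glue u' v) + b' * (e y' : Hd d A q) (glue u' v))
    = a * conj a' * (if restr S x = u ∧ restr S x' = u' ∧ restr Sᶜ x = restr Sᶜ x' then 1 else 0)
    + a * conj b' * (if restr S x = u ∧ restr S y' = u' ∧ restr Sᶜ x = restr Sᶜ y' then 1 else 0)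
    + b * conj a' * (if restr S y = u ∧ restr S x' = u' ∧ restr Sᶜ y = restr Sᶜ x' then 1 else 0)
    + b * conj b' * (if restr S y = u ∧ restr S y' = u' ∧ restr Sᶜ y = restr Sᶜ y' then 1 else 0)
    := by
  classical
  have hterm : ∀ v : Rst d A q Sᶜ,
      (a * (e x : Hd d A q) (glue u v) + b * (e y : Hd d A q) (glue u v))
      * conj (a' * (e x' : Hd d A q) (glue u' v) + b' * (e y' : Hd d A q) (glue u' v))
      = a * conj a' * ((e x : Hd d A q) (glue u v) * conj ((e x' : Hd d A q) (glue u' v)))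
      + a * conj b' * ((e x : Hd d A q) (glue u v) * conj ((e y' : Hd d A q) (glue u' v)))
      + b * conj a' * ((e y : Hd d A q) (glue u v) * conj ((e x' : Hd d A q) (glue u' v)))
      + b * conj b' * ((e y : Hd d A q) (glue u v) * conj ((e y' : Hd d A q) (glue u' v))) := by
    intro v
    simp only [map_add, map_mul]
    ring
  rw [tsum_congr hterm]
  have S1 : ∀ (z z' : Cf d A q) (cc cc' : ℂ), Summable (fun v : Rst d A q Sᶜ =>
      cc * cc' * ((e z : Hd d A q) (glue u v) * conj ((e z' : Hd d A q) (glue u' v)))) := by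
    intro z z' cc cc'
    exact (summable_mul_conj (e z) (e z') _ _ (glue_right_injective u)
      (glue_right_injective u')).mul_left _
  rw [Summable.tsum_add ((S1 x x' a (conj a')).add (S1 x y' a (conj b')) |>.add (S1 y x' b (conj a')))
      (S1 y y' b (conj b')),
    Summable.tsum_add ((S1 x x' a (conj a')).add (S1 x y' a (conj b'))) (S1 y x' b (conj a')),
    Summable.tsum_add (S1 x x' a (conj a')) (S1 x y' a (conj b'))]
  rw [tsum_mul_left, tsum_mul_left, tsum_mul_left, tsum_mul_left]
  rw [tsum_e_mul_conj, tsum_e_mul_conj, tsum_e_mul_conj, tsum_e_mul_conj]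

end States
section Forward

variable {d : ℕ} {A : Type} {q : A}

lemma comb_apply (a b : ℂ) (x y : Cf d A q) (c : Cf d A q) :
    (a • e x + b • e y : Hd d A q) c = a * (e x : Hd d A q) c + b * (e y : Hd d A q) c := by
  rw [lp.coeFn_add, lp.coeFn_smul, lp.coeFn_smul]
  simp [smul_eq_mul]

lemma sqrt2_inv_mul_self : (((Real.sqrt 2 : ℝ) : ℂ))⁻¹ * (((Real.sqrt 2 : ℝ) : ℂ))⁻¹
    = (1 / 2 : ℂ) := by
  rw [← mul_inv]
  norm_cast
  rw [Real.mul_self_sqrt (by norm_num)]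
  norm_num

lemma conj_sqrt2_inv : conj ((((Real.sqrt 2 : ℝ) : ℂ))⁻¹) = (((Real.sqrt 2 : ℝ) : ℂ))⁻¹ := by
  rw [map_inv₀, Complex.conj_ofReal]

lemma sup_inner (x y : Cf d A q) (hxy : x ≠ y) :
    (inner ℂ ((((Real.sqrt 2 : ℝ) : ℂ))⁻¹ • (e x + e y))
      ((((Real.sqrt 2 : ℝ) : ℂ))⁻¹ • (e x + e y)) : ℂ) = 1 := by
  rw [inner_smul_left, inner_smul_right, inner_add_left, inner_add_right, inner_add_right]
  rw [inner_e_self, inner_e_self, inner_e_ne hxy, inner_e_ne (Ne.symm hxy), conj_sqrt2_inv]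
  rw [show (1 : ℂ) + 0 + (0 + 1) = 2 by ring, ← mul_assoc, sqrt2_inv_mul_self]
  norm_num

lemma forward_direction [Fintype A] (F : Cf d A q → Cf d A q)
    (hinj : Function.Injective F) (G : Hd d A q →L[ℂ] Hd d A q)
    (hG : ∀ c, G (e c) = e (F c)) (𝒩 : Set (Fin d → ℤ)) (h𝒩 : 𝒩.Finite)
    (hloc : ∀ 𝒜 : Set (Fin d → ℤ), 𝒜.Finite → LocalAt G 𝒜 𝒩) : Reversible F := by
  classical
  refine ⟨-𝒩, h𝒩.preimage neg_injective.injOn, ?_⟩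
  intro x y i hFagree
  by_cases hxy : x = y
  · rw [hxy]
  have hFne : F x ≠ F y := fun h => hxy (hinj h)
  set 𝒜 : Set (Fin d → ℤ) := {j | (F x).1 j ≠ (F y).1 j} with h𝒜def
  have h𝒜fin : 𝒜.Finite := by
    apply ((F x).2.union (F y).2).subset
    intro j hj
    by_contra hc
    simp only [Set.mem_union, Set.mem_setOf_eq, not_or, not_not] at hc
    exact hj (hc.1.trans hc.2.symm)
  set S : Set (Fin d → ℤ) := 𝒜 + 𝒩 with hSdef
  have h𝒜c : restr 𝒜ᶜ (F x) = restr 𝒜ᶜ (F y) := by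
    apply Rst.ext'
    intro j
    have := j.2
    simp only [Set.mem_compl_iff, h𝒜def, Set.mem_setOf_eq, not_not] at this
    exact this
  -- the key claim
  have hkey : restr Sᶜ x = restr Sᶜ y := by
    by_contra hS
    set a : ℂ := (((Real.sqrt 2 : ℝ) : ℂ))⁻¹ with ha
    have ha2 : a * conj a = 1 / 2 := by rw [conj_sqrt2_inv, sqrt2_inv_mul_self]
    set φ : Hd d A q := a • (e x + e y) with hφdef
    have hφ : (inner ℂ φ φ : ℂ) = 1 := sup_inner x y hxy
    set ρ : State (Hd d A q) := pureState φ hφ with hρ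
    set ρ' : State (Hd d A q) := mixState (e x) (e y) (inner_e_self x) (inner_e_self y)
      (inner_e_ne hxy) with hρ'
    have hφc : ∀ c : Cf d A q, (φ : Hd d A q) c
        = a * (e x : Hd d A q) c + a * (e y : Hd d A q) c := by
      intro c
      rw [hφdef, smul_add]
      exact comb_apply a a x y c
    have hred : reduct ρ S = reduct ρ' S := by
      funext u u'
      have h1 : reduct ρ S u u'
          = ∑' v : Rst d A q Sᶜ, (φ : Hd d A q) (glue u v) * conj ((φ : Hd d A q) (glue u' v)) :=
        pureState_redFam φ hφ id rfl S u u'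
      have h2 : reduct ρ' S u u'
          = (1/2 : ℂ) * (∑' v : Rst d A q Sᶜ,
              (e x : Hd d A q) (glue u v) * conj ((e x : Hd d A q) (glue u' v)))
          + (1/2 : ℂ) * (∑' v : Rst d A q Sᶜ,
              (e y : Hd d A q) (glue u v) * conj ((e y : Hd d A q) (glue u' v))) :=
        mixState_redFam _ _ _ _ _ id rfl S u u'
      rw [h1, h2]
      rw [tsum_congr (fun v => by rw [hφc (glue u v), hφc (glue u' v)])]
      rw [tsum_comb_mul_conj]
      rw [tsum_e_mul_conj, tsum_e_mul_conj]
      have e1 : (if restr S x = u ∧ restr S y = u' ∧ restr Sᶜ x = restr Sᶜ y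
          then (1:ℂ) else 0) = 0 := if_neg (fun hcon => hS hcon.2.2)
      have e2 : (if restr S y = u ∧ restr S x = u' ∧ restr Sᶜ y = restr Sᶜ x
          then (1:ℂ) else 0) = 0 := if_neg (fun hcon => hS hcon.2.2.symm)
      rw [e1, e2, ha2]
      ring
    have happ := hloc 𝒜 h𝒜fin ρ ρ' hred
    -- evaluate at (restr 𝒜 (F x), restr 𝒜 (F y))
    set u : Rst d A q 𝒜 := restr 𝒜 (F x) with hu
    set u' : Rst d A q 𝒜 := restr 𝒜 (F y) with hu'
    have huu' : u ≠ u' := by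
      intro hconu
      apply hFne
      apply eq_of_restr_eq ?_ h𝒜c
      rw [← hu, ← hu', hconu]
    have hGφ : ∀ c : Cf d A q, (G φ : Hd d A q) c
        = a * (e (F x) : Hd d A q) c + a * (e (F y) : Hd d A q) c := by
      intro c
      have hGφ2 : G φ = a • e (F x) + a • e (F y) := by
        rw [hφdef, map_smul, map_add, hG, hG, smul_add]
      rw [hGφ2]
      exact comb_apply a a (F x) (F y) c
    have hGe : ∀ z : Cf d A q, ∀ c : Cf d A q, (G (e z) : Hd d A q) c = (e (F z) : Hd d A q) c := by
      intro z c; rw [hG]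
    have hL : redApply G ρ 𝒜 u u' = 1 / 2 := by
      rw [redApply]
      rw [pureState_redFam φ hφ (fun v => G v) (map_zero G) 𝒜 u u']
      rw [tsum_congr (fun v => by rw [hGφ (glue u v), hGφ (glue u' v)])]
      rw [tsum_comb_mul_conj]
      have e1 : (if restr 𝒜 (F x) = u ∧ restr 𝒜 (F x) = u' ∧ restr 𝒜ᶜ (F x) = restr 𝒜ᶜ (F x)
          then (1:ℂ) else 0) = 0 := if_neg (fun hcon => huu' (hu.trans hcon.2.1))
      have e2 : (if restr 𝒜 (F x) = u ∧ restr 𝒜 (F y) = u' ∧ restr 𝒜ᶜ (F x) = restr 𝒜ᶜ (F y)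
          then (1:ℂ) else 0) = 1 := if_pos ⟨hu.symm, hu'.symm, h𝒜c⟩
      have e3 : (if restr 𝒜 (F y) = u ∧ restr 𝒜 (F x) = u' ∧ restr 𝒜ᶜ (F y) = restr 𝒜ᶜ (F x)
          then (1:ℂ) else 0) = 0 := if_neg (fun hcon => huu' (hu.trans hcon.2.1))
      have e4 : (if restr 𝒜 (F y) = u ∧ restr 𝒜 (F y) = u' ∧ restr 𝒜ᶜ (F y) = restr 𝒜ᶜ (F y)
          then (1:ℂ) else 0) = 0 := if_neg (fun hcon => huu' (hcon.1.symm.trans hu'.symm))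
      rw [e1, e2, e3, e4, ha2]
      ring
    have hR : redApply G ρ' 𝒜 u u' = 0 := by
      rw [redApply]
      rw [mixState_redFam _ _ _ _ _ (fun v => G v) (map_zero G) 𝒜 u u']
      simp only [hG]
      rw [tsum_e_mul_conj, tsum_e_mul_conj]
      have e1 : (if restr 𝒜 (F x) = u ∧ restr 𝒜 (F x) = u' ∧ restr 𝒜ᶜ (F x) = restr 𝒜ᶜ (F x)
          then (1:ℂ) else 0) = 0 := if_neg (fun hcon => huu' (hu.trans hcon.2.1))
      have e4 : (if restr 𝒜 (F y) = u ∧ restr 𝒜 (F y) = u' ∧ restr 𝒜ᶜ (F y) = restr 𝒜ᶜ (F y)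
          then (1:ℂ) else 0) = 0 := if_neg (fun hcon => huu' (hcon.1.symm.trans hu'.symm))
      rw [e1, e4]
      ring
    rw [happ] at hL
    rw [hR] at hL
    norm_num at hL
  -- conclude
  have hiS : i ∉ S := by
    intro hiS
    rw [hSdef] at hiS
    rcases Set.mem_add.1 hiS with ⟨aa, haa, n, hn, hsum⟩
    have hmem : -n ∈ -𝒩 := by simpa using hn
    have := hFagree (-n) hmem
    rw [show i + -n = aa by rw [← hsum]; ring] at this
    exact haa this
  exact congrArg (fun u : Rst d A q Sᶜ => u.1 ⟨i, hiS⟩) hkey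

end Forward
section Comb

variable {d : ℕ} {A : Type} {q : A}

/-- The all-quiescent configuration. -/
def qc : Cf d A q := ⟨fun _ => q, by simp⟩

/-- The compatibility predicate on pairs of restrictions to `S`. -/
def GoodAt (F : Cf d A q → Cf d A q) (NI : Set (Fin d → ℤ)) (𝒜 S : Set (Fin d → ℤ))
    (u u' : Rst d A q 𝒜) (w w' : Rst d A q S) : Prop :=
  (∀ j (hj : j ∈ S), ¬(∃ m ∈ NI, j + m ∈ 𝒜) → w.1 ⟨j, hj⟩ = w'.1 ⟨j, hj⟩)
  ∧ restr 𝒜 (F (glue w (restr Sᶜ (qc)))) = u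
  ∧ restr 𝒜 (F (glue w' (restr Sᶜ (qc)))) = u'
  ∧ ∀ j, j ∉ 𝒜 → (F (glue w (restr Sᶜ (qc)))).1 j = (F (glue w' (restr Sᶜ (qc)))).1 j

variable {F : Cf d A q → Cf d A q} {NC : Set (Fin d → ℤ)}
  {f : (NC → A) → A} {NI 𝒜 S : Set (Fin d → ℤ)}

lemma Floc (hf : ∀ c i, (F c).1 i = f (fun n => c.1 (i + n.1))) (c c' : Cf d A q)
    (j : Fin d → ℤ) (h : ∀ n ∈ NC, c.1 (j + n) = c'.1 (j + n)) : (F c).1 j = (F c').1 j := by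
  rw [hf, hf]
  congr 1
  funext n
  exact h n.1 n.2

/-- Reversibility used pointwise: if `F x` and `F y` agree off `𝒜` and `j` is not in
`𝒜 - NI`, then `x` and `y` agree at `j`. -/
lemma rev_step (hrev : ∀ x y : Cf d A q, ∀ i : Fin d → ℤ,
      (∀ n ∈ NI, (F x).1 (i + n) = (F y).1 (i + n)) → x.1 i = y.1 i)
    {x y : Cf d A q} (hoff : ∀ j, j ∉ 𝒜 → (F x).1 j = (F y).1 j)
    {j : Fin d → ℤ} (hj : ¬(∃ m ∈ NI, j + m ∈ 𝒜)) : x.1 j = y.1 j := by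
  apply hrev
  intro n hn
  apply hoff
  intro hmem
  exact hj ⟨n, hn, hmem⟩

/-- The central combinatorial characterization. -/
lemma P_iff_GoodAt
    (hf : ∀ c i, (F c).1 i = f (fun n => c.1 (i + n.1)))
    (hrev : ∀ x y : Cf d A q, ∀ i : Fin d → ℤ,
      (∀ n ∈ NI, (F x).1 (i + n) = (F y).1 (i + n)) → x.1 i = y.1 i)
    (H1 : ∀ j ∈ 𝒜, ∀ n ∈ NC, j + n ∈ S)
    (H3 : ∀ j : Fin d → ℤ, (∃ m ∈ NC, ∃ m' ∈ NI, j + m + m' ∈ 𝒜) → ∀ n ∈ NC, j + n ∈ S)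
    (u u' : Rst d A q 𝒜) (w w' : Rst d A q S) (v₀ : Rst d A q Sᶜ) :
    (restr 𝒜 (F (glue w v₀)) = u ∧ restr 𝒜 (F (glue w' v₀)) = u'
      ∧ ∀ j, j ∉ 𝒜 → (F (glue w v₀)).1 j = (F (glue w' v₀)).1 j)
    ↔ GoodAt F NI 𝒜 S u u' w w' := by
  set x : Cf d A q := glue w v₀ with hx
  set y : Cf d A q := glue w' v₀ with hy
  set xh : Cf d A q := glue w (restr Sᶜ (qc)) with hxh
  set yh : Cf d A q := glue w' (restr Sᶜ (qc)) with hyh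
  -- agreement of x and xh on S, etc.
  have hxxh : ∀ j ∈ S, x.1 j = xh.1 j := by
    intro j hj
    rw [hx, hxh, glue_apply_mem _ _ hj, glue_apply_mem _ _ hj]
  have hyyh : ∀ j ∈ S, y.1 j = yh.1 j := by
    intro j hj
    rw [hy, hyh, glue_apply_mem _ _ hj, glue_apply_mem _ _ hj]
  -- F x and F xh agree at j whenever j + NC ⊆ S
  have hFxxh : ∀ j : Fin d → ℤ, (∀ n ∈ NC, j + n ∈ S) → (F x).1 j = (F xh).1 j := by
    intro j hj
    exact Floc hf x xh j (fun n hn => hxxh (j + n) (hj n hn))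
  have hFyyh : ∀ j : Fin d → ℤ, (∀ n ∈ NC, j + n ∈ S) → (F y).1 j = (F yh).1 j := by
    intro j hj
    exact Floc hf y yh j (fun n hn => hyyh (j + n) (hj n hn))
  constructor
  · rintro ⟨hu, hu', hoff⟩
    have hxyP1 : ∀ j : Fin d → ℤ, ¬(∃ m ∈ NI, j + m ∈ 𝒜) → x.1 j = y.1 j :=
      fun j hj => rev_step hrev hoff hj
    have g1 : ∀ j (hj : j ∈ S), ¬(∃ m ∈ NI, j + m ∈ 𝒜) → w.1 ⟨j, hj⟩ = w'.1 ⟨j, hj⟩ := by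
      intro j hj hP1
      have := hxyP1 j hP1
      rwa [hx, hy, glue_apply_mem _ _ hj, glue_apply_mem _ _ hj] at this
    -- xh and yh agree at all non-(𝒜-NI) points
    have hxhyh : ∀ j : Fin d → ℤ, ¬(∃ m ∈ NI, j + m ∈ 𝒜) → xh.1 j = yh.1 j := by
      intro j hP1
      by_cases hjS : j ∈ S
      · rw [hxh, hyh, glue_apply_mem _ _ hjS, glue_apply_mem _ _ hjS]
        exact g1 j hjS hP1
      · rw [hxh, hyh, glue_apply_not_mem _ _ hjS, glue_apply_not_mem _ _ hjS]
    refine ⟨g1, ?_, ?_, ?_⟩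
    · rw [← hu]
      apply Rst.ext'
      intro j
      rw [restr_apply, restr_apply]
      exact (hFxxh j.1 (H1 j.1 j.2)).symm
    · rw [← hu']
      apply Rst.ext'
      intro j
      rw [restr_apply, restr_apply]
      exact (hFyyh j.1 (H1 j.1 j.2)).symm
    · intro j hj𝒜
      by_cases hP2 : ∃ m ∈ NC, ∃ m' ∈ NI, j + m + m' ∈ 𝒜
      · rw [← hFxxh j (H3 j hP2), ← hFyyh j (H3 j hP2)]
        exact hoff j hj𝒜
      · push_neg at hP2
        apply Floc hf
        intro n hn
        apply hxhyh
        rintro ⟨m', hm', hmem⟩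
        exact hP2 n hn m' hm' hmem
  · rintro ⟨g1, g2, g3, g4⟩
    have hxy_off : ∀ j : Fin d → ℤ, ¬(∃ m ∈ NI, j + m ∈ 𝒜) → x.1 j = y.1 j := by
      intro j hP1
      by_cases hjS : j ∈ S
      · rw [hx, hy, glue_apply_mem _ _ hjS, glue_apply_mem _ _ hjS]
        exact g1 j hjS hP1
      · rw [hx, hy, glue_apply_not_mem _ _ hjS, glue_apply_not_mem _ _ hjS]
    refine ⟨?_, ?_, ?_⟩
    · rw [← g2]
      apply Rst.ext'
      intro j
      rw [restr_apply, restr_apply]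
      exact hFxxh j.1 (H1 j.1 j.2)
    · rw [← g3]
      apply Rst.ext'
      intro j
      rw [restr_apply, restr_apply]
      exact hFyyh j.1 (H1 j.1 j.2)
    · intro j hj𝒜
      by_cases hP2 : ∃ m ∈ NC, ∃ m' ∈ NI, j + m + m' ∈ 𝒜
      · rw [hFxxh j (H3 j hP2), hFyyh j (H3 j hP2)]
        exact g4 j hj𝒜
      · push_neg at hP2
        apply Floc hf
        intro n hn
        apply hxy_off
        rintro ⟨m', hm', hmem⟩
        exact hP2 n hn m' hm' hmem

/-- If `F x = F y` off `𝒜` then `x = y` off `S ⊇ 𝒜 - NI`. -/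
lemma restr_compl_eq_of_P
    (hrev : ∀ x y : Cf d A q, ∀ i : Fin d → ℤ,
      (∀ n ∈ NI, (F x).1 (i + n) = (F y).1 (i + n)) → x.1 i = y.1 i)
    (H2 : ∀ j : Fin d → ℤ, (∃ m ∈ NI, j + m ∈ 𝒜) → j ∈ S)
    {x y : Cf d A q} (hoff : ∀ j, j ∉ 𝒜 → (F x).1 j = (F y).1 j) :
    restr Sᶜ x = restr Sᶜ y := by
  apply Rst.ext'
  intro j
  rw [restr_apply, restr_apply]
  apply rev_step hrev hoff
  intro hP1
  exact j.2 (H2 j.1 hP1)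

end Comb
section Backward

variable {d : ℕ} {A : Type} {q : A} {F : Cf d A q → Cf d A q} {NC : Set (Fin d → ℤ)}
  {f : (NC → A) → A} {NI 𝒜 S : Set (Fin d → ℤ)} {G : Hd d A q →L[ℂ] Hd d A q}

lemma claimA [Fintype A]
    (hf : ∀ c i, (F c).1 i = f (fun n => c.1 (i + n.1)))
    (hrev : ∀ x y : Cf d A q, ∀ i : Fin d → ℤ,
      (∀ n ∈ NI, (F x).1 (i + n) = (F y).1 (i + n)) → x.1 i = y.1 i)
    (hinj : Function.Injective F)
    (hG : ∀ c, G (e c) = e (F c))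
    (hS : S.Finite)
    (H1 : ∀ j ∈ 𝒜, ∀ n ∈ NC, j + n ∈ S)
    (H2 : ∀ j : Fin d → ℤ, (∃ m ∈ NI, j + m ∈ 𝒜) → j ∈ S)
    (H3 : ∀ j : Fin d → ℤ, (∃ m ∈ NC, ∃ m' ∈ NI, j + m + m' ∈ 𝒜) → ∀ n ∈ NC, j + n ∈ S)
    (u u' : Rst d A q 𝒜) (ψ : Hd d A q) :
    ∑' v : Rst d A q 𝒜ᶜ, (G ψ) (glue u v) * conj ((G ψ) (glue u' v))
    = ∑' t : Rst d A q S × Rst d A q S,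
        (if GoodAt F NI 𝒜 S u u' t.1 t.2 then
          (∑' v₀ : Rst d A q Sᶜ, ψ (glue t.1 v₀) * conj (ψ (glue t.2 v₀))) else 0) := by
  classical
  haveI : Finite (↥S) := hS.to_subtype
  haveI : Finite (Rst d A q S) := finiteRst
  set g : (Rst d A q S × Rst d A q S) × Rst d A q Sᶜ → ℂ := fun t =>
    if GoodAt F NI 𝒜 S u u' t.1.1 t.1.2 then
      ψ (glue t.1.1 t.2) * conj (ψ (glue t.1.2 t.2)) else 0 with hg
  set fv : Rst d A q 𝒜ᶜ → ℂ := fun v =>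
    (G ψ) (glue u v) * conj ((G ψ) (glue u' v)) with hfv
  -- the bijection step
  have step1 : ∑' v, fv v = ∑' t, g t := by
    apply tsum_eq_tsum_of_ne_zero_bij
      (i := fun t => restr 𝒜ᶜ (F (glue t.1.1.1 t.1.2)))
    · -- injectivity
      rintro ⟨⟨⟨w₁, w'₁⟩, v₁⟩, ht₁⟩ ⟨⟨⟨w₂, w'₂⟩, v₂⟩, ht₂⟩ hi
      simp only [Function.mem_support, hg] at ht₁ ht₂
      have hGood₁ : GoodAt F NI 𝒜 S u u' w₁ w'₁ := by
        by_contra hc; exact ht₁ (if_neg hc)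
      have hGood₂ : GoodAt F NI 𝒜 S u u' w₂ w'₂ := by
        by_contra hc; exact ht₂ (if_neg hc)
      have hP₁ := (P_iff_GoodAt hf hrev H1 H3 u u' w₁ w'₁ v₁).2 hGood₁
      have hP₂ := (P_iff_GoodAt hf hrev H1 H3 u u' w₂ w'₂ v₂).2 hGood₂
      simp only at hi
      have hFx : F (glue w₁ v₁) = F (glue w₂ v₂) := by
        rw [← glue_restr 𝒜 (F (glue w₁ v₁)), ← glue_restr 𝒜 (F (glue w₂ v₂)),
          hP₁.1, hP₂.1, hi]
      have hx : glue w₁ v₁ = glue w₂ v₂ := hinj hFx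
      have hww : w₁ = w₂ ∧ v₁ = v₂ := glue_inj_parts hx
      have hyx₁ : restr 𝒜ᶜ (F (glue w'₁ v₁)) = restr 𝒜ᶜ (F (glue w₁ v₁)) :=
        Rst.ext' fun j => (hP₁.2.2 j.1 j.2).symm
      have hyx₂ : restr 𝒜ᶜ (F (glue w'₂ v₂)) = restr 𝒜ᶜ (F (glue w₂ v₂)) :=
        Rst.ext' fun j => (hP₂.2.2 j.1 j.2).symm
      have hFy : F (glue w'₁ v₁) = F (glue w'₂ v₂) := by
        rw [← glue_restr 𝒜 (F (glue w'₁ v₁)), ← glue_restr 𝒜 (F (glue w'₂ v₂)),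
          hP₁.2.1, hP₂.2.1, hyx₁, hyx₂, hFx]
      have hy : glue w'₁ v₁ = glue w'₂ v₂ := hinj hFy
      have hw' : w'₁ = w'₂ := (glue_inj_parts hy).1
      apply Subtype.ext
      simp only [Prod.mk.injEq]
      exact ⟨⟨hww.1, hw'⟩, hww.2⟩
    · -- support fv ⊆ range i
      intro v hv
      simp only [Function.mem_support, hfv] at hv
      have h1 : glue u v ∈ Set.range F := by
        by_contra h
        rw [G_apply_not_range hG ψ h, zero_mul] at hv
        exact hv rfl
      have h2 : glue u' v ∈ Set.range F := by
        by_contra h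
        rw [G_apply_not_range hG ψ h, map_zero, mul_zero] at hv
        exact hv rfl
      obtain ⟨x, hx⟩ := h1
      obtain ⟨y, hy⟩ := h2
      have pu : restr 𝒜 (F x) = u := by rw [hx]; exact restr_glue _ _ _
      have pu' : restr 𝒜 (F y) = u' := by rw [hy]; exact restr_glue _ _ _
      have hoff : ∀ j, j ∉ 𝒜 → (F x).1 j = (F y).1 j := by
        intro j hj
        rw [hx, hy, glue_apply_not_mem _ _ hj, glue_apply_not_mem _ _ hj]
      have hScompl : restr Sᶜ x = restr Sᶜ y := restr_compl_eq_of_P hrev H2 hoff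
      have hgx : glue (restr S x) (restr Sᶜ x) = x := glue_restr S x
      have hgy : glue (restr S y) (restr Sᶜ x) = y := by rw [hScompl]; exact glue_restr S y
      have hGood : GoodAt F NI 𝒜 S u u' (restr S x) (restr S y) := by
        apply (P_iff_GoodAt hf hrev H1 H3 u u' _ _ (restr Sᶜ x)).1
        rw [hgx, hgy]
        exact ⟨pu, pu', hoff⟩
      have hval : g ((restr S x, restr S y), restr Sᶜ x) = ψ x * conj (ψ y) := by
        rw [hg]
        simp only
        rw [if_pos hGood, hgx, hgy]
      refine ⟨⟨((restr S x, restr S y), restr Sᶜ x), ?_⟩, ?_⟩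
      · simp only [Function.mem_support, hval]
        have hexp : (G ψ) (glue u v) * conj ((G ψ) (glue u' v)) = ψ x * conj (ψ y) := by
          rw [← hx, ← hy, G_apply_F hG hinj, G_apply_F hG hinj]
        rwa [hexp] at hv
      · simp only
        rw [hgx, hx]
        exact restr_compl_glue _ _ _
    · -- values agree
      rintro ⟨⟨⟨w, w'⟩, v₀⟩, ht⟩
      simp only [Function.mem_support, hg] at ht
      have hGood : GoodAt F NI 𝒜 S u u' w w' := by
        by_contra hc; exact ht (if_neg hc)
      have hP := (P_iff_GoodAt hf hrev H1 H3 u u' w w' v₀).2 hGood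
      have hyx : restr 𝒜ᶜ (F (glue w' v₀)) = restr 𝒜ᶜ (F (glue w v₀)) :=
        Rst.ext' fun j => (hP.2.2 j.1 j.2).symm
      have hFx : glue u (restr 𝒜ᶜ (F (glue w v₀))) = F (glue w v₀) :=
        glue_eq_iff.2 ⟨hP.1, rfl⟩
      have hFy : glue u' (restr 𝒜ᶜ (F (glue w v₀))) = F (glue w' v₀) :=
        glue_eq_iff.2 ⟨hP.2.1, hyx⟩
      simp only [hfv, hg]
      rw [hFx, hFy, G_apply_F hG hinj, G_apply_F hG hinj, if_pos hGood]
  rw [step1]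
  -- now split the product tsum
  have hsummand : ∀ b : Rst d A q S × Rst d A q S, Summable (fun v₀ => g (b, v₀)) := by
    intro b
    by_cases hGood : GoodAt F NI 𝒜 S u u' b.1 b.2
    · simp only [hg, if_pos hGood]
      exact summable_mul_conj ψ ψ _ _ (glue_right_injective b.1) (glue_right_injective b.2)
    · simp only [hg, if_neg hGood]
      exact summable_zero
  have hsumg : Summable g := by
    apply Summable.of_norm
    have hM : Summable (fun t : (Rst d A q S × Rst d A q S) × Rst d A q Sᶜ =>
        (‖ψ (glue t.1.1 t.2)‖ ^ 2 + ‖ψ (glue t.1.2 t.2)‖ ^ 2) / 2) := by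
      apply (summable_prod_of_nonneg ?_).2
      constructor
      · intro b
        exact (((summable_sq_comp ψ _ (glue_right_injective b.1)).add
          (summable_sq_comp ψ _ (glue_right_injective b.2))).div_const 2)
      · exact Summable.of_finite
      · intro t
        positivity
    apply Summable.of_nonneg_of_le (fun t => norm_nonneg _) ?_ hM
    intro t
    rw [hg]
    simp only
    split_ifs with h
    · exact norm_mul_conj_le ψ ψ _ _
    · rw [norm_zero]; positivity
  rw [Summable.tsum_prod' hsumg hsummand]
  apply tsum_congr
  intro b
  by_cases hGood : GoodAt F NI 𝒜 S u u' b.1 b.2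
  · rw [if_pos hGood]
    apply tsum_congr
    intro v₀
    rw [hg]
    simp only
    rw [if_pos hGood]
  · rw [if_neg hGood]
    have : ∀ v₀ : Rst d A q Sᶜ, g (b, v₀) = 0 := by
      intro v₀; rw [hg]; simp only; rw [if_neg hGood]
    rw [tsum_congr this, tsum_zero]

end Backward
section Final

variable {d : ℕ} {A : Type} {q : A} {F : Cf d A q → Cf d A q} {NC : Set (Fin d → ℤ)}
  {f : (NC → A) → A} {NI 𝒜 S : Set (Fin d → ℤ)} {G : Hd d A q →L[ℂ] Hd d A q}

lemma state_norm_sq (ρ : State (Hd d A q)) (k : ℕ) (hk : ρ.p k ≠ 0) : ‖ρ.ψ k‖ ^ 2 = 1 := by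
  have h := ρ.ortho k k hk hk
  rw [if_pos rfl] at h
  rw [inner_self_eq_norm_sq_to_K (𝕜 := ℂ)] at h
  have h2 : ((‖ρ.ψ k‖ ^ 2 : ℝ) : ℂ) = ((1 : ℝ) : ℂ) := by push_cast; exact h
  exact_mod_cast h2

lemma summable_p_mul (ρ : State (Hd d A q)) (X : ℕ → ℂ)
    (hX : ∀ k, ρ.p k ≠ 0 → ‖X k‖ ≤ 1) : Summable (fun k => (ρ.p k : ℂ) * X k) := by
  apply Summable.of_norm_bounded ρ.sum_one.summable
  intro k
  by_cases hk : ρ.p k = 0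
  · simp [hk]
  · rw [norm_mul, Complex.norm_real, Real.norm_eq_abs, abs_of_nonneg (ρ.nonneg k)]
    calc ρ.p k * ‖X k‖ ≤ ρ.p k * 1 := by
          exact mul_le_mul_of_nonneg_left (hX k hk) (ρ.nonneg k)
      _ = ρ.p k := mul_one _

lemma redApply_formula [Fintype A]
    (hf : ∀ c i, (F c).1 i = f (fun n => c.1 (i + n.1)))
    (hrev : ∀ x y : Cf d A q, ∀ i : Fin d → ℤ,
      (∀ n ∈ NI, (F x).1 (i + n) = (F y).1 (i + n)) → x.1 i = y.1 i)
    (hinj : Function.Injective F)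
    (hG : ∀ c, G (e c) = e (F c))
    (hS : S.Finite)
    (H1 : ∀ j ∈ 𝒜, ∀ n ∈ NC, j + n ∈ S)
    (H2 : ∀ j : Fin d → ℤ, (∃ m ∈ NI, j + m ∈ 𝒜) → j ∈ S)
    (H3 : ∀ j : Fin d → ℤ, (∃ m ∈ NC, ∃ m' ∈ NI, j + m + m' ∈ 𝒜) → ∀ n ∈ NC, j + n ∈ S)
    (ρ : State (Hd d A q)) (u u' : Rst d A q 𝒜) :
    redApply G ρ 𝒜 u u' = ∑' t : Rst d A q S × Rst d A q S,
      (if GoodAt F NI 𝒜 S u u' t.1 t.2 then reduct ρ S t.1 t.2 else 0) := by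
  classical
  haveI : Finite (↥S) := hS.to_subtype
  haveI : Finite (Rst d A q S) := finiteRst
  letI : Fintype (Rst d A q S) := Fintype.ofFinite _
  -- the inner sums
  set Rk : ℕ → Rst d A q S × Rst d A q S → ℂ := fun k t =>
    ∑' v₀ : Rst d A q Sᶜ, (ρ.ψ k) (glue t.1 v₀) * conj ((ρ.ψ k) (glue t.2 v₀)) with hRk
  have hRkbound : ∀ k, ρ.p k ≠ 0 → ∀ t, ‖Rk k t‖ ≤ 1 := by
    intro k hk t
    have := norm_tsum_mul_conj_le (ρ.ψ k) (ρ.ψ k) _ _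
      (glue_right_injective t.1) (glue_right_injective t.2)
    rw [state_norm_sq ρ k hk] at this
    calc ‖Rk k t‖ ≤ (1 + 1) / 2 := this
      _ = 1 := by norm_num
  have hsummand : ∀ t : Rst d A q S × Rst d A q S,
      Summable (fun k => (ρ.p k : ℂ) * (if GoodAt F NI 𝒜 S u u' t.1 t.2 then Rk k t else 0)) := by
    intro t
    apply summable_p_mul
    intro k hk
    split_ifs with h
    · exact hRkbound k hk t
    · rw [norm_zero]; norm_num
  have step : redApply G ρ 𝒜 u u'
      = ∑' k, ∑' t : Rst d A q S × Rst d A q S,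
          (ρ.p k : ℂ) * (if GoodAt F NI 𝒜 S u u' t.1 t.2 then Rk k t else 0) := by
    rw [redApply, redFam]
    apply tsum_congr
    intro k
    rw [claimA hf hrev hinj hG hS H1 H2 H3 u u' (ρ.ψ k), ← tsum_mul_left]
  rw [step]
  have step2 : ∀ k, ∑' t : Rst d A q S × Rst d A q S,
      (ρ.p k : ℂ) * (if GoodAt F NI 𝒜 S u u' t.1 t.2 then Rk k t else 0)
      = ∑ t : Rst d A q S × Rst d A q S,
      (ρ.p k : ℂ) * (if GoodAt F NI 𝒜 S u u' t.1 t.2 then Rk k t else 0) := by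
    intro k
    exact tsum_fintype _
  rw [tsum_congr step2]
  rw [Summable.tsum_finsetSum (fun t _ => hsummand t)]
  rw [← tsum_fintype (L := SummationFilter.unconditional _)]
  apply tsum_congr
  intro t
  by_cases hGood : GoodAt F NI 𝒜 S u u' t.1 t.2
  · rw [if_pos hGood]
    rw [reduct, redFam]
    apply tsum_congr
    intro k
    rw [if_pos hGood]
  · rw [if_neg hGood]
    have : ∀ k : ℕ, (ρ.p k : ℂ) * (if GoodAt F NI 𝒜 S u u' t.1 t.2 then Rk k t else 0) = 0 := by
      intro k
      rw [if_neg hGood, mul_zero]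
    rw [tsum_congr this, tsum_zero]

lemma backward_direction [Fintype A] (F : Cf d A q → Cf d A q) (hCA : IsCA F)
    (hinj : Function.Injective F) (G : Hd d A q →L[ℂ] Hd d A q)
    (hG : ∀ c, G (e c) = e (F c)) (hRev : Reversible F) :
    ∃ 𝒩 : Set (Fin d → ℤ), 𝒩.Finite ∧
      ∀ 𝒜 : Set (Fin d → ℤ), 𝒜.Finite → LocalAt G 𝒜 𝒩 := by
  classical
  obtain ⟨NC, hNCfin, f, hfq, hf⟩ := hCA
  obtain ⟨NI, hNIfin, hrev⟩ := hRev
  have hNIneg : (-NI).Finite := hNIfin.preimage neg_injective.injOn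
  have hNCneg : (-NC).Finite := hNCfin.preimage neg_injective.injOn
  set 𝒩 : Set (Fin d → ℤ) := (NC ∪ (-NI)) ∪ ((-NI) + (-NC) + NC) with h𝒩def
  have h𝒩fin : 𝒩.Finite := (hNCfin.union hNIneg).union ((hNIneg.add hNCneg).add hNCfin)
  refine ⟨𝒩, h𝒩fin, ?_⟩
  intro 𝒜 h𝒜 ρ ρ' hred
  set S : Set (Fin d → ℤ) := 𝒜 + 𝒩 with hSdef
  have hS : S.Finite := h𝒜.add h𝒩fin
  have H1 : ∀ j ∈ 𝒜, ∀ n ∈ NC, j + n ∈ S := by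
    intro j hj n hn
    exact Set.add_mem_add hj (Or.inl (Or.inl hn))
  have H2 : ∀ j : Fin d → ℤ, (∃ m ∈ NI, j + m ∈ 𝒜) → j ∈ S := by
    rintro j ⟨m, hm, ha⟩
    have hmem : -m ∈ -NI := by simpa using hm
    have : (j + m) + (-m) ∈ S := Set.add_mem_add ha (Or.inl (Or.inr hmem))
    simpa using this
  have H3 : ∀ j : Fin d → ℤ, (∃ m ∈ NC, ∃ m' ∈ NI, j + m + m' ∈ 𝒜) → ∀ n ∈ NC, j + n ∈ S := by
    rintro j ⟨m, hm, m', hm', ha⟩ n hn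
    have hmem : (-m') + (-m) + n ∈ (-NI) + (-NC) + NC :=
      Set.add_mem_add (Set.add_mem_add (by simpa using hm') (by simpa using hm)) hn
    have : (j + m + m') + ((-m') + (-m) + n) ∈ S := Set.add_mem_add ha (Or.inr hmem)
    have heq : (j + m + m') + ((-m') + (-m) + n) = j + n := by abel
    rwa [heq] at this
  funext u u'
  rw [redApply_formula hf hrev hinj hG hS H1 H2 H3 ρ u u',
    redApply_formula hf hrev hinj hG hS H1 H2 H3 ρ' u u']
  apply tsum_congr
  intro t
  rw [show reduct ρ S = reduct ρ' S from hred]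

end Final

/-- For an injective cellular automaton `F` on finite configurations in
dimension `d ≥ 1`, the linearization `F̃` (the continuous linear map `G` with
`G e_c = e_{F c}`) is uniformly local iff `F` is reversible. -/
theorem quantization_uniformly_local_iff_reversible
    {d : ℕ} (hd : 0 < d) {A : Type} [Fintype A] {q : A}
    (F : Cf d A q → Cf d A q) (hCA : IsCA F) (hinj : Function.Injective F)
    (G : Hd d A q →L[ℂ] Hd d A q) (hG : ∀ c, G (e c) = e (F c)) :
    (∃ 𝒩 : Set (Fin d → ℤ), 𝒩.Finite ∧
      ∀ 𝒜 : Set (Fin d → ℤ), 𝒜.Finite → LocalAt G 𝒜 𝒩) ↔ Reversible F := by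
  constructor
  · rintro ⟨𝒩, h𝒩, hloc⟩
    exact forward_direction F hinj G hG 𝒩 h𝒩 hloc
  · intro hRev
    exact backward_direction F hCA hinj G hG hRev

end
end

section
/- Let G be a bounded linear operator on H = ℓ²(C_f, ℂ) with adjoint G†, let 𝒜 ⊆ ℤ^d, and let 𝒩 ⊆ ℤ^d be finite. Then the following are equivalent: (i) for all states ρ and ρ' on H, if ρ|_{𝒜+𝒩} = ρ'|_{𝒜+𝒩} then (GρG†)|_𝒜 = (Gρ'G†)|_𝒜; (ii) for every bounded operator B on H localized in 𝒜, the operator G† B G is localized in 𝒜 + 𝒩. -/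
open scoped Pointwise ComplexConjugate
open Classical

noncomputable section

variable (d : ℕ) (A : Type) (q : A)

variable {d A q}

/-- A bounded operator `B` is localized in `S`. -/
def Localized (B : Hd d A q →L[ℂ] Hd d A q) (S : Set (Fin d → ℤ)) : Prop :=
  ∃ b : Rst d A q S → Rst d A q S → ℂ, ∀ c c' : Cf d A q,
    (inner ℂ (e c) (B (e c')) : ℂ) =
      if ∀ i ∉ S, c.1 i = c'.1 i then b (restr S c) (restr S c') else 0

namespace LocalProof

variable {S : Set (Fin d → ℤ)}

lemma glue_restr (S : Set (Fin d → ℤ)) (c : Cf d A q) :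
    glue (restr S c) (restr Sᶜ c) = c := by
  apply Subtype.ext; funext i
  simp only [glue, restr]
  split <;> rfl

lemma restr_glue (u : Rst d A q S) (v : Rst d A q Sᶜ) : restr S (glue u v) = u := by
  apply Subtype.ext; funext i
  simp only [glue, restr, dif_pos i.2]

lemma restr_compl_glue (u : Rst d A q S) (v : Rst d A q Sᶜ) : restr Sᶜ (glue u v) = v := by
  apply Subtype.ext; funext i
  have hi : (i : Fin d → ℤ) ∉ S := i.2
  simp only [glue, restr, dif_neg hi]

def cfe (S : Set (Fin d → ℤ)) : (Rst d A q S × Rst d A q Sᶜ) ≃ Cf d A q where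
  toFun p := glue p.1 p.2
  invFun c := (restr S c, restr Sᶜ c)
  left_inv p := by simp [restr_glue, restr_compl_glue]
  right_inv c := glue_restr S c

lemma glue_eq_iff (u : Rst d A q S) (v : Rst d A q Sᶜ) (c : Cf d A q) :
    glue u v = c ↔ u = restr S c ∧ v = restr Sᶜ c := by
  constructor
  · rintro rfl; exact ⟨(restr_glue u v).symm, (restr_compl_glue u v).symm⟩
  · rintro ⟨rfl, rfl⟩; exact glue_restr S c

lemma agree_iff (S : Set (Fin d → ℤ)) (c c' : Cf d A q) :
    (∀ i ∉ S, c.1 i = c'.1 i) ↔ restr Sᶜ c = restr Sᶜ c' := by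
  constructor
  · intro h; apply Subtype.ext; funext i
    exact h i.1 i.2
  · intro h i hi
    exact congrFun (congrArg Subtype.val h) ⟨i, hi⟩

lemma e_apply (c x : Cf d A q) : (e (q := q) c) x = if x = c then 1 else 0 := by
  simp [e, lp.single_apply, Pi.single_apply]

lemma inner_e (c : Cf d A q) (f : Hd d A q) : (inner ℂ (e (q := q) c) f : ℂ) = f c := by
  rw [e, lp.inner_single_left]
  simp [RCLike.inner_apply]

lemma inner_eq (f g : Hd d A q) : (inner ℂ f g : ℂ) = ∑' c, conj (f c) * g c := by
  have h := lp.inner_eq_tsum (𝕜 := ℂ) (G := fun _ : Cf d A q => ℂ) f g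
  rw [h]; exact tsum_congr fun c => by simp [RCLike.inner_apply, mul_comm]

lemma summable_conj_mul (f g : Hd d A q) : Summable (fun c => conj (f c) * g c) := by
  have := lp.summable_inner (𝕜 := ℂ) f g
  simpa [RCLike.inner_apply, mul_comm] using this

lemma hasSum_normSq (f : Hd d A q) : HasSum (fun c => ‖f c‖ ^ 2) (‖f‖ ^ 2) := by
  have h := (lp.hasSum_inner (𝕜 := ℂ) f f).mapL Complex.reCLM
  have e1 : ∀ x : ℂ, Complex.reCLM (inner ℂ x x : ℂ) = ‖x‖ ^ 2 := by
    intro x; rw [← inner_self_eq_norm_sq (𝕜 := ℂ)]; rfl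
  have e2 : Complex.reCLM (inner ℂ f f : ℂ) = ‖f‖ ^ 2 := by
    rw [← inner_self_eq_norm_sq (𝕜 := ℂ)]; rfl
  simp only [e1, e2] at h; exact h


lemma glue_injective (w : Rst d A q S) : Function.Injective (fun v : Rst d A q Sᶜ => glue w v) := by
  intro v₁ v₂ h
  have := congrArg (restr Sᶜ) h
  rwa [restr_compl_glue, restr_compl_glue] at this

lemma single_apply' (c₀ c : Cf d A q) (a : ℂ) :
    (lp.single 2 c₀ a : Hd d A q) c = if c = c₀ then a else 0 := by
  simp [lp.single_apply, Pi.single_apply]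

/-- The cross-correlation kernel. -/
def RedP (x y : Hd d A q) (S : Set (Fin d → ℤ)) (w w' : Rst d A q S) : ℂ :=
  ∑' v, x (glue w v) * conj (y (glue w' v))

lemma conj_RedP (x y : Hd d A q) (S : Set (Fin d → ℤ)) (w w' : Rst d A q S) :
    conj (RedP x y S w w') = ∑' v, conj (x (glue w v)) * y (glue w' v) := by
  rw [RedP]
  simp only [starRingEnd_apply]
  rw [tsum_star]
  congr 1; funext v
  simp [star_mul', mul_comm]

section Localized

variable {M : Hd d A q →L[ℂ] Hd d A q} {m : Rst d A q S → Rst d A q S → ℂ}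

def IsLoc (M : Hd d A q →L[ℂ] Hd d A q) (S : Set (Fin d → ℤ))
    (m : Rst d A q S → Rst d A q S → ℂ) : Prop :=
  ∀ c c' : Cf d A q, (inner ℂ (e c) (M (e c')) : ℂ) =
    if ∀ i ∉ S, c.1 i = c'.1 i then m (restr S c) (restr S c') else 0

lemma coeff_eq (c c' : Cf d A q) : (M (e c')) c = (inner ℂ (e (q := q) c) (M (e c')) : ℂ) :=
  (inner_e c (M (e c'))).symm

lemma isLoc_coeff (hm : IsLoc M S m) (u u' : Rst d A q S) (v v' : Rst d A q Sᶜ) :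
    (M (e (glue u' v'))) (glue u v) = if v = v' then m u u' else 0 := by
  rw [coeff_eq, hm, restr_glue, restr_glue]
  have hcond : (∀ i ∉ S, (glue u v).1 i = (glue u' v').1 i) ↔ v = v' := by
    rw [agree_iff, restr_compl_glue, restr_compl_glue]
  exact if_congr hcond rfl rfl

lemma hasSum_apply_coeff (y : Hd d A q) (c : Cf d A q) :
    HasSum (fun c' => y c' * (M (e c')) c) ((M y) c) := by
  have h0 : HasSum (fun c' => lp.single 2 c' (y c')) y := lp.hasSum_single ENNReal.ofNat_ne_top y
  have h1 := (h0.mapL M).mapL (innerSL ℂ (e (q := q) c))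
  have h2 : ∀ c' : Cf d A q, y c' * (M (e c')) c =
      (innerSL ℂ (e (q := q) c)) (M (lp.single 2 c' (y c'))) := by
    intro c'
    have hsm : lp.single 2 c' (y c') = y c' • e c' := by
      rw [e, ← lp.single_smul]; norm_num
    rw [hsm, map_smul]
    simp only [innerSL_apply_apply, inner_smul_right]
    rw [inner_e]
  have h3 : (innerSL ℂ (e (q := q) c)) (M y) = (M y) c := by
    simp only [innerSL_apply_apply]; rw [inner_e]
  rw [← h3]
  exact h1.congr_fun h2

/-- Block of `y` supported on configurations restricting to `w` on `S`. -/
def blk (S : Set (Fin d → ℤ)) (w : Rst d A q S) (y : Hd d A q) : Hd d A q :=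
  ∑' v, (lp.single 2 (glue w v) (y (glue w v)) : Hd d A q)

lemma summable_blk (w : Rst d A q S) (y : Hd d A q) :
    Summable (fun v : Rst d A q Sᶜ => (lp.single 2 (glue w v) (y (glue w v)) : Hd d A q)) :=
  ((lp.hasSum_single ENNReal.ofNat_ne_top y).summable).comp_injective (glue_injective w)

lemma blk_apply (w : Rst d A q S) (y : Hd d A q) (c : Cf d A q) :
    (blk S w y) c = if restr S c = w then y c else 0 := by
  have hs : HasSum (fun v : Rst d A q Sᶜ => (lp.single 2 (glue w v) (y (glue w v)) : Hd d A q))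
      (blk S w y) := (summable_blk w y).hasSum
  have h1 := hs.mapL (innerSL ℂ (e (q := q) c))
  simp only [innerSL_apply_apply, inner_e] at h1
  refine h1.tsum_eq.symm.trans ?_
  by_cases h : restr S c = w
  · rw [tsum_eq_single (restr Sᶜ c)]
    · have hc : glue w (restr Sᶜ c) = c := by rw [← h]; exact glue_restr S c
      rw [single_apply', if_pos hc.symm, if_pos h, hc]
    · intro v hv
      rw [single_apply', if_neg]
      intro hc
      exact hv (by rw [hc, restr_compl_glue])
  · rw [if_neg h]
    have hz : ∀ v : Rst d A q Sᶜ, (lp.single 2 (glue w v) (y (glue w v)) : Hd d A q) c = 0 := by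
      intro v
      rw [single_apply', if_neg]
      intro hc
      exact h (by rw [hc, restr_glue])
    rw [tsum_congr hz, tsum_zero]

lemma hasSum_blk (y : Hd d A q) : HasSum (fun w : Rst d A q S => blk S w y) y := by
  have h0 : HasSum (fun c => (lp.single 2 c (y c) : Hd d A q)) y :=
    lp.hasSum_single ENNReal.ofNat_ne_top y
  have h1 : HasSum ((fun c => (lp.single 2 c (y c) : Hd d A q)) ∘ (cfe S)) y :=
    (Equiv.hasSum_iff (cfe S)).2 h0
  exact h1.prod_fiberwise (fun w => (summable_blk w y).hasSum)

lemma M_blk_apply (hm : IsLoc M S m) (w' : Rst d A q S) (y : Hd d A q) (c : Cf d A q) :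
    (M (blk S w' y)) c = m (restr S c) w' * y (glue w' (restr Sᶜ c)) := by
  rw [(hasSum_apply_coeff (M := M) (blk S w' y) c).tsum_eq.symm]
  rw [← Function.Injective.tsum_eq (glue_injective w')
    (f := fun c' => (blk S w' y) c' * (M (e c')) c) ?_]
  · have hterm : ∀ v : Rst d A q Sᶜ, (blk S w' y) (glue w' v) * (M (e (glue w' v))) c =
        (if restr Sᶜ c = v then m (restr S c) w' * y (glue w' v) else 0) := by
      intro v
      rw [blk_apply, if_pos (restr_glue w' v)]
      conv_lhs => rw [← glue_restr S c]
      rw [isLoc_coeff hm]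
      by_cases hv : restr Sᶜ c = v
      · rw [if_pos hv, if_pos hv]; ring
      · rw [if_neg hv, if_neg hv, mul_zero]
    rw [tsum_congr hterm,
      tsum_eq_single (restr Sᶜ c) (fun v hv => if_neg (fun h => hv h.symm))]
    · rw [if_pos rfl]
  · intro c' hc'
    simp only [Function.mem_support] at hc'
    have hb : (blk S w' y) c' ≠ 0 := fun h => hc' (by rw [h, zero_mul])
    rw [blk_apply] at hb
    by_cases hr : restr S c' = w'
    · exact ⟨restr Sᶜ c', by rw [← hr]; exact glue_restr S c'⟩
    · rw [if_neg hr] at hb; exact absurd rfl hb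

lemma summable_inner_blk (hm : IsLoc M S m) (x y : Hd d A q) (w' : Rst d A q S) :
    Summable (fun p : Rst d A q S × Rst d A q Sᶜ =>
      conj (x (glue p.1 p.2)) * (m p.1 w' * y (glue w' p.2))) := by
  have h0 := summable_conj_mul x (M (blk S w' y))
  have h1 := ((cfe S).summable_iff
    (f := fun c => conj (x c) * (M (blk S w' y)) c)).2 h0
  refine h1.congr ?_
  intro p
  simp only [Function.comp, cfe, Equiv.coe_fn_mk]
  rw [M_blk_apply hm, restr_glue, restr_compl_glue]

lemma inner_M_blk_prod (hm : IsLoc M S m) (x y : Hd d A q) (w' : Rst d A q S) :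
    (inner ℂ x (M (blk S w' y)) : ℂ) =
      ∑' p : Rst d A q S × Rst d A q Sᶜ,
        conj (x (glue p.1 p.2)) * (m p.1 w' * y (glue w' p.2)) := by
  rw [inner_eq]
  rw [← (cfe S).tsum_eq (fun c => conj (x c) * (M (blk S w' y)) c)]
  have he : ∀ p : Rst d A q S × Rst d A q Sᶜ,
      conj (x ((cfe S) p)) * (M (blk S w' y)) ((cfe S) p) =
      conj (x (glue p.1 p.2)) * (m p.1 w' * y (glue w' p.2)) := by
    intro p
    simp only [cfe, Equiv.coe_fn_mk]
    rw [M_blk_apply hm, restr_glue, restr_compl_glue]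
  rw [tsum_congr he]

lemma inner_M_blk (hm : IsLoc M S m) (x y : Hd d A q) (w' : Rst d A q S) :
    (inner ℂ x (M (blk S w' y)) : ℂ) =
      ∑' w, m w w' * conj (RedP x y S w w') := by
  rw [inner_M_blk_prod hm]
  rw [Summable.tsum_prod' (summable_inner_blk hm x y w')
    (fun w => (summable_inner_blk hm x y w').prod_factor w)]
  refine tsum_congr (fun w => ?_)
  rw [conj_RedP, ← tsum_mul_left]
  refine tsum_congr (fun v => ?_)
  ring

lemma hasSum_inner_M_blk (x y : Hd d A q) :
    HasSum (fun w' : Rst d A q S => (inner ℂ x (M (blk S w' y)) : ℂ)) (inner ℂ x (M y) : ℂ) := by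
  have h1 := ((hasSum_blk (S := S) y).mapL M).mapL (innerSL ℂ x)
  simpa only [innerSL_apply_apply] using h1

lemma inner_M_eq (hm : IsLoc M S m) (x y : Hd d A q) :
    (inner ℂ x (M y) : ℂ) = ∑' w', ∑' w, m w w' * conj (RedP x y S w w') := by
  rw [← (hasSum_inner_M_blk (M := M) x y).tsum_eq]
  exact tsum_congr (fun w' => inner_M_blk hm x y w')

end Localized
end LocalProof

namespace LocalProof
section Chunk3

variable {S 𝒜 : Set (Fin d → ℤ)}

/-- All-quiescent restriction. -/
def vq (S : Set (Fin d → ℤ)) : Rst d A q Sᶜ := ⟨fun _ => q, by simp⟩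

def pureState (φ : Hd d A q) (h : (inner ℂ φ φ : ℂ) = 1) : State (Hd d A q) where
  ψ := fun k => if k = 0 then φ else 0
  p := fun k => if k = 0 then 1 else 0
  nonneg := by intro k; split <;> norm_num
  sum_one := hasSum_ite_eq 0 1
  ortho := by
    intro j k hj hk
    have hj0 : j = 0 := by by_contra h'; exact hj (if_neg h')
    have hk0 : k = 0 := by by_contra h'; exact hk (if_neg h')
    subst hj0; subst hk0; simpa using h

lemma reduct_pure (φ : Hd d A q) (h : (inner ℂ φ φ : ℂ) = 1) (S : Set (Fin d → ℤ))
    (u u' : Rst d A q S) : reduct (pureState φ h) S u u' = RedP φ φ S u u' := by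
  rw [reduct, redFam, tsum_eq_single 0]
  · simp [pureState, RedP]
  · intro k hk; simp [pureState, if_neg hk]

lemma redApply_pure (G : Hd d A q →L[ℂ] Hd d A q) (φ : Hd d A q) (h : (inner ℂ φ φ : ℂ) = 1)
    (u u' : Rst d A q 𝒜) :
    redApply G (pureState φ h) 𝒜 u u' = RedP (G φ) (G φ) 𝒜 u u' := by
  rw [redApply, redFam, tsum_eq_single 0]
  · simp [pureState, RedP]
  · intro k hk; simp [pureState, if_neg hk]

lemma phi_coord (a b : ℂ) (c c' x : Cf d A q) :
    (a • e c + b • e (q := q) c') x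
      = a * (if x = c then 1 else 0) + b * (if x = c' then 1 else 0) := by
  show a * (e (q := q) c) x + b * (e (q := q) c') x = _
  rw [e_apply, e_apply]

lemma RedP_phi_agree (a b : ℂ) {c c' : Cf d A q} (hvv : restr Sᶜ c = restr Sᶜ c')
    (w w' : Rst d A q S) :
    RedP (a • e c + b • e (q := q) c') (a • e c + b • e c') S w w' =
      (a * (if w = restr S c then 1 else 0) + b * (if w = restr S c' then 1 else 0)) *
      conj (a * (if w' = restr S c then 1 else 0) + b * (if w' = restr S c' then 1 else 0)) := by
  have hco : ∀ (w₀ : Rst d A q S) (v : Rst d A q Sᶜ),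
      (a • e c + b • e (q := q) c') (glue w₀ v) =
      if v = restr Sᶜ c then
        (a * (if w₀ = restr S c then 1 else 0) + b * (if w₀ = restr S c' then 1 else 0))
      else 0 := by
    intro w₀ v
    rw [phi_coord]
    by_cases hv : v = restr Sᶜ c
    · rw [if_pos hv]
      congr 2
      · rw [glue_eq_iff]; subst hv; simp
      · rw [glue_eq_iff]; subst hv; rw [hvv]; simp
    · rw [if_neg hv]
      rw [if_neg (fun hh => hv ((glue_eq_iff _ _ _).1 hh).2), 
          if_neg (fun hh => hv (hvv ▸ ((glue_eq_iff _ _ _).1 hh).2))]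
      ring
  rw [RedP]
  rw [tsum_congr (fun v => by rw [hco w v, hco w' v])]
  rw [tsum_eq_single (restr Sᶜ c)]
  · simp
  · intro v hv; rw [if_neg hv, zero_mul]

lemma RedP_phi_disagree (a b : ℂ) {c c' : Cf d A q} (hvv : restr Sᶜ c ≠ restr Sᶜ c')
    (w w' : Rst d A q S) :
    RedP (a • e c + b • e (q := q) c') (a • e c + b • e c') S w w' =
      a * conj a * (if w = restr S c then 1 else 0) * (if w' = restr S c then 1 else 0) +
      b * conj b * (if w = restr S c' then 1 else 0) * (if w' = restr S c' then 1 else 0) := by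
  have hco : ∀ (w₀ : Rst d A q S) (v : Rst d A q Sᶜ),
      (a • e c + b • e (q := q) c') (glue w₀ v) =
      (if v = restr Sᶜ c then a * (if w₀ = restr S c then 1 else 0) else 0) +
      (if v = restr Sᶜ c' then b * (if w₀ = restr S c' then 1 else 0) else 0) := by
    intro w₀ v
    rw [phi_coord]
    congr 1
    · by_cases hv : v = restr Sᶜ c
      · rw [if_pos hv]; congr 1; rw [glue_eq_iff]; subst hv; simp
      · rw [if_neg hv, if_neg (fun hh => hv ((glue_eq_iff _ _ _).1 hh).2), mul_zero]
    · by_cases hv : v = restr Sᶜ c'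
      · rw [if_pos hv]; congr 1; rw [glue_eq_iff]; subst hv; simp
      · rw [if_neg hv, if_neg (fun hh => hv ((glue_eq_iff _ _ _).1 hh).2), mul_zero]
  have hterm : ∀ v : Rst d A q Sᶜ,
      (a • e c + b • e (q := q) c') (glue w v) * conj ((a • e c + b • e c') (glue w' v)) =
      (if v = restr Sᶜ c then
        a * conj a * (if w = restr S c then 1 else 0) * (if w' = restr S c then 1 else 0) else 0) +
      (if v = restr Sᶜ c' then
        b * conj b * (if w = restr S c' then 1 else 0) * (if w' = restr S c' then 1 else 0)
        else 0) := by
    intro v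
    rw [hco w v, hco w' v]
    by_cases hv : v = restr Sᶜ c <;> by_cases hv' : v = restr Sᶜ c'
    · exact absurd (hv ▸ hv') hvv
    · rw [if_pos hv, if_pos hv, if_neg hv', if_neg hv', if_pos hv, if_neg hv']
      simp only [add_zero, map_mul]
      by_cases h1 : w = restr S c <;> by_cases h2 : w' = restr S c <;>
        simp [h1, h2]
    · rw [if_neg hv, if_neg hv, if_pos hv', if_pos hv', if_neg hv, if_pos hv']
      simp only [zero_add, map_mul]
      by_cases h1 : w = restr S c' <;> by_cases h2 : w' = restr S c' <;>
        simp [h1, h2]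
    · rw [if_neg hv, if_neg hv, if_neg hv', if_neg hv', if_neg hv, if_neg hv']
      simp
  rw [RedP, tsum_congr hterm, Summable.tsum_add ?_ ?_]
  · rw [tsum_ite_eq, tsum_ite_eq]
  · exact summable_of_ne_finset_zero (s := {restr Sᶜ c}) (by
      intro v hv; rw [if_neg (by simpa using hv)])
  · exact summable_of_ne_finset_zero (s := {restr Sᶜ c'}) (by
      intro v hv; rw [if_neg (by simpa using hv)])

end Chunk3

section Forward

variable {S 𝒜 : Set (Fin d → ℤ)}
variable (G : Hd d A q →L[ℂ] Hd d A q) {B : Hd d A q →L[ℂ] Hd d A q}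
  {b : Rst d A q 𝒜 → Rst d A q 𝒜 → ℂ}

lemma inner_conjM (x y : Hd d A q) :
    (inner ℂ x (((ContinuousLinearMap.adjoint G).comp (B.comp G)) y) : ℂ) =
    (inner ℂ (G x) (B (G y)) : ℂ) := by
  simp [ContinuousLinearMap.comp_apply, ContinuousLinearMap.adjoint_inner_right]

lemma dep (hb : IsLoc B 𝒜 b) {x y x' y' : Hd d A q}
    (h : ∀ w w', RedP (G x) (G y) 𝒜 w w' = RedP (G x') (G y') 𝒜 w w') :
    (inner ℂ (G x) (B (G y)) : ℂ) = (inner ℂ (G x') (B (G y')) : ℂ) := by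
  rw [inner_M_eq hb (G x) (G y), inner_M_eq hb (G x') (G y')]
  exact tsum_congr fun w' => tsum_congr fun w => by rw [h w w']

lemma ptrans
    (hloc : ∀ ρ ρ' : State (Hd d A q), reduct ρ S = reduct ρ' S →
      redApply G ρ 𝒜 = redApply G ρ' 𝒜)
    (hb : IsLoc B 𝒜 b) {φ φ' : Hd d A q} (hφ : (inner ℂ φ φ : ℂ) = 1)
    (hφ' : (inner ℂ φ' φ' : ℂ) = 1)
    (h : ∀ w w', RedP φ φ S w w' = RedP φ' φ' S w w') :
    (inner ℂ (G φ) (B (G φ)) : ℂ) = (inner ℂ (G φ') (B (G φ')) : ℂ) := by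
  have h1 : reduct (pureState φ hφ) S = reduct (pureState φ' hφ') S := by
    funext u u'; rw [reduct_pure, reduct_pure]; exact h u u'
  have h2 := hloc _ _ h1
  apply dep G hb
  intro w w'
  rw [← redApply_pure G φ hφ, ← redApply_pure G φ' hφ', h2]

lemma e_norm (c : Cf d A q) : (inner ℂ (e (q := q) c) (e c) : ℂ) = 1 := by
  rw [inner_e, e_apply, if_pos rfl]

lemma RedP_e (c : Cf d A q) (w w' : Rst d A q S) :
    RedP (e (q := q) c) (e c) S w w' =
      (if w = restr S c then 1 else 0) * (if w' = restr S c then 1 else 0) := by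
  have h0 : (e (q := q) c) = (1:ℂ) • e c + (0:ℂ) • e c := by simp
  rw [h0, RedP_phi_agree 1 0 rfl w w']
  simp [apply_ite (starRingEnd ℂ)]

lemma phi_norm {r : ℝ} (hrr : (r:ℂ) * (r:ℂ) = 2⁻¹) {σ : ℂ} (hσ : σ * conj σ = 1)
    {x y : Cf d A q} (hxy : x ≠ y) :
    (inner ℂ ((r:ℂ) • e x + ((r:ℂ)*σ) • e (q := q) y)
      ((r:ℂ) • e x + ((r:ℂ)*σ) • e y) : ℂ) = 1 := by
  have hxy' : (e (q := q) y) x = 0 := by rw [e_apply, if_neg hxy]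
  have hyx' : (e (q := q) x) y = 0 := by rw [e_apply, if_neg (Ne.symm hxy)]
  simp only [inner_add_left, inner_add_right, inner_smul_left, inner_smul_right, inner_e,
    map_mul, Complex.conj_ofReal, hxy', hyx', e_apply, if_pos rfl, if_true]
  linear_combination (1 + σ * conj σ) * hrr + (1/2 : ℂ) * hσ

lemma hexp (r : ℝ) (σ : ℂ) (x y : Cf d A q) :
    (inner ℂ (G ((r:ℂ) • e x + ((r:ℂ)*σ) • e y))
      (B (G ((r:ℂ) • e x + ((r:ℂ)*σ) • e y))) : ℂ) =
    ((r:ℂ)*(r:ℂ)) * ((inner ℂ (G (e x)) (B (G (e x))) : ℂ)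
      + σ * (inner ℂ (G (e x)) (B (G (e y))) : ℂ)
      + conj σ * (inner ℂ (G (e y)) (B (G (e x))) : ℂ)
      + (σ * conj σ) * (inner ℂ (G (e y)) (B (G (e y))) : ℂ)) := by
  simp only [map_add, map_smul, inner_add_left, inner_add_right, inner_smul_left,
    inner_smul_right, map_mul, Complex.conj_ofReal]
  ring

lemma forward
    (hloc : ∀ ρ ρ' : State (Hd d A q), reduct ρ S = reduct ρ' S →
      redApply G ρ 𝒜 = redApply G ρ' 𝒜)
    (hB : Localized B 𝒜) :
    Localized ((ContinuousLinearMap.adjoint G).comp (B.comp G)) S := by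
  obtain ⟨b, hb⟩ := hB
  have hb : IsLoc B 𝒜 b := hb
  set r : ℝ := (Real.sqrt 2)⁻¹ with hrdef
  have hrr : (r:ℂ) * (r:ℂ) = 2⁻¹ := by
    rw [← Complex.ofReal_mul]
    rw [hrdef, ← mul_inv, Real.mul_self_sqrt (by norm_num : (0:ℝ) ≤ 2)]
    norm_num
  have hrrne : (r:ℂ) * (r:ℂ) ≠ 0 := by rw [hrr]; norm_num
  -- diagonal transfer
  have hdiag : ∀ c : Cf d A q,
      (inner ℂ (G (e c)) (B (G (e c))) : ℂ) =
      (inner ℂ (G (e (glue (restr S c) (vq S)))) (B (G (e (glue (restr S c) (vq S))))) : ℂ) := by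
    intro c
    apply ptrans G hloc hb (e_norm c) (e_norm _)
    intro w w'
    rw [RedP_e, RedP_e, restr_glue]
  refine ⟨fun w w' => (inner ℂ (G (e (glue w (vq S)))) (B (G (e (glue w' (vq S))))) : ℂ), ?_⟩
  intro c c'
  dsimp only
  rw [inner_conjM]
  by_cases hagree : ∀ i ∉ S, c.1 i = c'.1 i
  · rw [if_pos hagree]
    have hvv : restr Sᶜ c = restr Sᶜ c' := (agree_iff S c c').1 hagree
    by_cases hcc : c = c'
    · subst hcc
      exact hdiag c
    · have hrc : restr S c ≠ restr S c' := by
        intro hh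
        exact hcc (by rw [← glue_restr S c, ← glue_restr S c', hh, hvv])
      have hct : glue (restr S c) (vq S) ≠ glue (restr S c') (vq S) := by
        intro hh
        exact hrc (by rw [← restr_glue (restr S c) (vq S), hh, restr_glue])
      have hvvt : restr Sᶜ (glue (restr S c) (vq S)) = restr Sᶜ (glue (restr S c') (vq S)) := by
        rw [restr_compl_glue, restr_compl_glue]
      have hE : ∀ σ : ℂ, σ * conj σ = 1 →
          (inner ℂ (G ((r:ℂ) • e c + ((r:ℂ)*σ) • e c'))
            (B (G ((r:ℂ) • e c + ((r:ℂ)*σ) • e c'))) : ℂ) =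
          (inner ℂ (G ((r:ℂ) • e (glue (restr S c) (vq S)) +
              ((r:ℂ)*σ) • e (glue (restr S c') (vq S))))
            (B (G ((r:ℂ) • e (glue (restr S c) (vq S)) +
              ((r:ℂ)*σ) • e (glue (restr S c') (vq S))))) : ℂ) := by
        intro σ hσ
        apply ptrans G hloc hb (phi_norm hrr hσ hcc) (phi_norm hrr hσ hct)
        intro w w'
        rw [RedP_phi_agree _ _ hvv, RedP_phi_agree _ _ hvvt, restr_glue, restr_glue]
      have E1 := hE 1 (by simp)
      have EI := hE Complex.I (by simp)
      rw [hexp, hexp] at E1 EI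
      have E1' := mul_left_cancel₀ hrrne E1
      have EI' := mul_left_cancel₀ hrrne EI
      simp only [map_one, one_mul, mul_one, Complex.conj_I, mul_neg, neg_mul,
        Complex.I_mul_I, neg_neg] at E1' EI'
      have hI2 : Complex.I * Complex.I = (-1 : ℂ) := Complex.I_mul_I
      linear_combination (1/2 : ℂ) * E1' - (Complex.I/2) * EI' +
        (Complex.I/2 - 1/2) * hdiag c + (Complex.I/2 - 1/2) * hdiag c' +
        (((inner ℂ (G (e c)) (B (G (e c'))) : ℂ)
          - (inner ℂ (G (e (glue (restr S c) (vq S)))) (B (G (e (glue (restr S c') (vq S))))) : ℂ)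
          - (inner ℂ (G (e c')) (B (G (e c))) : ℂ)
          + (inner ℂ (G (e (glue (restr S c') (vq S)))) (B (G (e (glue (restr S c) (vq S))))) : ℂ))/2)
          * hI2
  · rw [if_neg hagree]
    have hvv : restr Sᶜ c ≠ restr Sᶜ c' := fun hh => hagree ((agree_iff S c c').2 hh)
    have hcc : c ≠ c' := fun hh => hvv (by rw [hh])
    have hE : ∀ σ σ' : ℂ, σ * conj σ = 1 → σ' * conj σ' = 1 →
        (inner ℂ (G ((r:ℂ) • e c + ((r:ℂ)*σ) • e c'))
          (B (G ((r:ℂ) • e c + ((r:ℂ)*σ) • e c'))) : ℂ) =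
        (inner ℂ (G ((r:ℂ) • e c + ((r:ℂ)*σ') • e c'))
          (B (G ((r:ℂ) • e c + ((r:ℂ)*σ') • e c'))) : ℂ) := by
      intro σ σ' hσ hσ'
      apply ptrans G hloc hb (phi_norm hrr hσ hcc) (phi_norm hrr hσ' hcc)
      intro w w'
      rw [RedP_phi_disagree _ _ hvv, RedP_phi_disagree _ _ hvv]
      simp only [map_mul, Complex.conj_ofReal]
      linear_combination ((if w = restr S c' then (1:ℂ) else 0) *
        (if w' = restr S c' then (1:ℂ) else 0) * (r:ℂ) * (r:ℂ)) * (hσ - hσ')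
    have E1 := hE 1 (-1) (by simp) (by simp)
    have EI := hE Complex.I (-Complex.I) (by simp) (by simp)
    rw [hexp, hexp] at E1 EI
    have E1' := mul_left_cancel₀ hrrne E1
    have EI' := mul_left_cancel₀ hrrne EI
    simp only [map_one, one_mul, mul_one, Complex.conj_I, map_neg, mul_neg, neg_mul,
      neg_neg, Complex.I_mul_I] at E1' EI'
    have hI2 : Complex.I * Complex.I = (-1 : ℂ) := Complex.I_mul_I
    linear_combination (1/4 : ℂ) * E1' - (Complex.I/4) * EI' +
      (((inner ℂ (G (e c)) (B (G (e c'))) : ℂ) - (inner ℂ (G (e c')) (B (G (e c))) : ℂ))/2) * hI2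

end Forward

section Bop

variable {𝒜 : Set (Fin d → ℤ)}

lemma sq_le_of_sq {a b : ℝ} (ha : 0 ≤ a) (hb : 0 ≤ b) (h : a^2 ≤ b^2) : a ≤ b := by nlinarith

lemma toReal_two_eq : ((2:ENNReal)).toReal = 2 := by norm_num

lemma rpow_two_eq (y : ℝ) : y ^ ((2:ENNReal)).toReal = y ^ 2 := by
  have h : ((2:ENNReal)).toReal = ((2:ℕ):ℝ) := by norm_num
  rw [h, Real.rpow_natCast]

def BopFun (u u' : Rst d A q 𝒜) (x : Hd d A q) : Cf d A q → ℂ := fun c =>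
  if restr 𝒜 c = u' then x (glue u (restr 𝒜ᶜ c)) else 0

lemma BopFun_memℓp (u u' : Rst d A q 𝒜) (x : Hd d A q) : Memℓp (BopFun u u' x) 2 := by
  apply memℓp_gen
  have h1 : Summable (fun c : Cf d A q => ‖BopFun u u' x c‖ ^ 2) := by
    refine (Function.Injective.summable_iff (glue_injective u') ?_).1 ?_
    · intro c hc
      have hr : restr 𝒜 c ≠ u' := by
        intro hh
        exact hc ⟨restr 𝒜ᶜ c, by rw [← hh]; exact glue_restr 𝒜 c⟩
      simp [BopFun, hr]
    · have h2 : Summable (fun v : Rst d A q 𝒜ᶜ => ‖x (glue u v)‖ ^ 2) :=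
        ((hasSum_normSq x).summable).comp_injective (glue_injective u)
      refine h2.congr fun v => ?_
      simp [Function.comp, BopFun, restr_glue, restr_compl_glue]
  exact h1.congr fun c => (rpow_two_eq _).symm

def BopLin (u u' : Rst d A q 𝒜) : Hd d A q →ₗ[ℂ] Hd d A q where
  toFun x := ⟨BopFun u u' x, BopFun_memℓp u u' x⟩
  map_add' x y := by
    apply lp.ext
    funext c
    simp only [lp.coeFn_add, Pi.add_apply]
    show BopFun u u' (x + y) c = BopFun u u' x c + BopFun u u' y c
    simp only [BopFun, lp.coeFn_add, Pi.add_apply]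
    split <;> simp
  map_smul' a x := by
    apply lp.ext
    funext c
    simp only [lp.coeFn_smul, Pi.smul_apply, RingHom.id_apply, smul_eq_mul]
    show BopFun u u' (a • x) c = a * BopFun u u' x c
    simp only [BopFun, lp.coeFn_smul, Pi.smul_apply, smul_eq_mul]
    split <;> simp
  
lemma BopLin_apply (u u' : Rst d A q 𝒜) (x : Hd d A q) (c : Cf d A q) :
    (BopLin u u' x) c = if restr 𝒜 c = u' then x (glue u (restr 𝒜ᶜ c)) else 0 := rfl

lemma BopLin_norm_le (u u' : Rst d A q 𝒜) (x : Hd d A q) : ‖BopLin u u' x‖ ≤ 1 * ‖x‖ := by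
  rw [one_mul]
  apply sq_le_of_sq (norm_nonneg _) (norm_nonneg _)
  have h1 : HasSum (fun c => ‖(BopLin u u' x) c‖ ^ 2) (‖BopLin u u' x‖ ^ 2) := hasSum_normSq _
  have h2 : HasSum (fun c => ‖x c‖ ^ 2) (‖x‖ ^ 2) := hasSum_normSq _
  rw [← h1.tsum_eq, ← h2.tsum_eq]
  rw [← Function.Injective.tsum_eq (glue_injective u')
      (f := fun c => ‖(BopLin u u' x) c‖ ^ 2) ?_]
  · have h3 : ∀ v : Rst d A q 𝒜ᶜ, ‖(BopLin u u' x) (glue u' v)‖ ^ 2 = ‖x (glue u v)‖ ^ 2 := by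
      intro v
      rw [BopLin_apply, if_pos (restr_glue u' v), restr_compl_glue]
    rw [tsum_congr h3]
    exact Summable.tsum_le_tsum_of_inj _ (glue_injective u) (fun c _ => by positivity)
      (fun v => le_rfl) (h2.summable.comp_injective (glue_injective u)) h2.summable
  · intro c hc
    simp only [Function.mem_support] at hc
    by_contra hr
    apply hc
    have : restr 𝒜 c ≠ u' := by
      intro hh
      exact hr ⟨restr 𝒜ᶜ c, by rw [← hh]; exact glue_restr 𝒜 c⟩
    rw [BopLin_apply, if_neg this]
    simp

def Bop (u u' : Rst d A q 𝒜) : Hd d A q →L[ℂ] Hd d A q :=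
  (BopLin u u').mkContinuous 1 (BopLin_norm_le u u')

lemma Bop_apply (u u' : Rst d A q 𝒜) (x : Hd d A q) (c : Cf d A q) :
    (Bop u u' x) c = if restr 𝒜 c = u' then x (glue u (restr 𝒜ᶜ c)) else 0 := rfl

lemma isLoc_Bop (u u' : Rst d A q 𝒜) :
    IsLoc (Bop u u') 𝒜 (fun w w'' => if w = u' ∧ w'' = u then 1 else 0) := by
  intro c c'
  dsimp only
  rw [inner_e, Bop_apply]
  by_cases hag : ∀ i ∉ 𝒜, c.1 i = c'.1 i
  · rw [if_pos hag]
    have hvv : restr 𝒜ᶜ c = restr 𝒜ᶜ c' := (agree_iff 𝒜 c c').1 hag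
    by_cases h1 : restr 𝒜 c = u'
    · rw [if_pos h1]
      by_cases h2 : restr 𝒜 c' = u
      · have hgl : glue u (restr 𝒜ᶜ c) = c' := by
          rw [glue_eq_iff]; exact ⟨h2.symm, hvv⟩
        rw [e_apply, if_pos hgl, if_pos ⟨h1, h2⟩]
      · have hgl : glue u (restr 𝒜ᶜ c) ≠ c' := fun hh => h2 (((glue_eq_iff _ _ _).1 hh).1.symm)
        rw [e_apply, if_neg hgl, if_neg (fun hh : _ ∧ _ => h2 hh.2)]
    · rw [if_neg h1, if_neg (fun hh : _ ∧ _ => h1 hh.1)]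
  · rw [if_neg hag]
    have hvv : restr 𝒜ᶜ c ≠ restr 𝒜ᶜ c' := fun hh => hag ((agree_iff 𝒜 c c').2 hh)
    by_cases h1 : restr 𝒜 c = u'
    · rw [if_pos h1, e_apply, if_neg (fun hh => hvv (((glue_eq_iff _ _ _).1 hh).2))]
    · rw [if_neg h1]

lemma inner_Bop (u u' : Rst d A q 𝒜) (x : Hd d A q) :
    (inner ℂ x (Bop u u' x) : ℂ) = RedP x x 𝒜 u u' := by
  rw [inner_eq]
  rw [← Function.Injective.tsum_eq (glue_injective u')
      (f := fun c => conj (x c) * (Bop u u' x) c) ?_]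
  · rw [RedP]
    refine tsum_congr fun v => ?_
    rw [Bop_apply, if_pos (restr_glue u' v), restr_compl_glue]
    ring
  · intro c hc
    simp only [Function.mem_support] at hc
    by_contra hr
    apply hc
    have : restr 𝒜 c ≠ u' := fun hh => hr ⟨restr 𝒜ᶜ c, by rw [← hh]; exact glue_restr 𝒜 c⟩
    rw [Bop_apply, if_neg this, mul_zero]

end Bop

section Mixture

variable {S 𝒜 : Set (Fin d → ℤ)}
variable {M : Hd d A q →L[ℂ] Hd d A q} {m : Rst d A q S → Rst d A q S → ℂ}

lemma state_norm (ρ : State (Hd d A q)) (k : ℕ) (h : ρ.p k ≠ 0) : ‖ρ.ψ k‖ = 1 := by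
  have h1 := ρ.ortho k k h h
  rw [if_pos rfl] at h1
  have h2 : ((‖ρ.ψ k‖^2 : ℝ) : ℂ) = 1 := by
    rw [← h1, inner_self_eq_norm_sq_to_K]
    norm_cast
  have h3 : (‖ρ.ψ k‖^2 : ℝ) = 1 := by exact_mod_cast h2
  nlinarith [norm_nonneg (ρ.ψ k)]

lemma hasSum_blk_normSq (z : Hd d A q) :
    HasSum (fun w' : Rst d A q S => ‖blk S w' z‖^2) (‖z‖^2) := by
  have h0 := hasSum_normSq z
  have h1 : HasSum ((fun c => ‖z c‖^2) ∘ (cfe S)) (‖z‖^2) := (Equiv.hasSum_iff (cfe S)).2 h0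
  refine h1.prod_fiberwise fun w' => ?_
  have h2 := hasSum_normSq (blk S w' z)
  have hvan : ∀ c ∉ Set.range (fun v : Rst d A q Sᶜ => glue w' v), ‖(blk S w' z) c‖^2 = 0 := by
    intro c hc
    have hr : restr S c ≠ w' := by
      intro hh
      exact hc ⟨restr Sᶜ c, by rw [← hh]; exact glue_restr S c⟩
    simp [blk_apply, hr]
  have h3 := (Function.Injective.hasSum_iff (glue_injective w')
    (f := fun c => ‖(blk S w' z) c‖^2) hvan).2 h2
  exact h3.congr_fun fun v => by
    simp only [Function.comp_apply, cfe, Equiv.coe_fn_mk]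
    rw [blk_apply, if_pos (restr_glue w' v)]

lemma norm_blk_le (w' : Rst d A q S) (z : Hd d A q) : ‖blk S w' z‖ ≤ ‖z‖ := by
  apply sq_le_of_sq (norm_nonneg _) (norm_nonneg _)
  exact le_hasSum (hasSum_blk_normSq z) w' (fun j _ => by positivity)

lemma inner_blk_blk (w' : Rst d A q S) (z y : Hd d A q) :
    (inner ℂ z (blk S w' y) : ℂ) = (inner ℂ (blk S w' z) (blk S w' y) : ℂ) := by
  rw [inner_eq, inner_eq]
  refine tsum_congr fun c => ?_
  by_cases h : restr S c = w' <;> simp [blk_apply, h]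

lemma abs_inner_M_blk_le (w' : Rst d A q S) (ψ : Hd d A q) :
    ‖(inner ℂ ψ (M (blk S w' ψ)) : ℂ)‖ ≤
      (1/2) * (‖blk S w' ((ContinuousLinearMap.adjoint M) ψ)‖^2 + ‖blk S w' ψ‖^2) := by
  have h1 : (inner ℂ ψ (M (blk S w' ψ)) : ℂ) =
      (inner ℂ (blk S w' ((ContinuousLinearMap.adjoint M) ψ)) (blk S w' ψ) : ℂ) := by
    rw [← ContinuousLinearMap.adjoint_inner_left, inner_blk_blk]
  rw [h1]
  have h2 := norm_inner_le_norm (𝕜 := ℂ)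
    (blk S w' ((ContinuousLinearMap.adjoint M) ψ)) (blk S w' ψ)
  nlinarith [norm_nonneg (blk S w' ((ContinuousLinearMap.adjoint M) ψ)),
    norm_nonneg (blk S w' ψ),
    sq_nonneg (‖blk S w' ((ContinuousLinearMap.adjoint M) ψ)‖ - ‖blk S w' ψ‖)]

lemma pnormC (p : ℝ) (h : 0 ≤ p) : ‖((p:ℝ):ℂ)‖ = p := by
  rw [Complex.norm_real]
  exact Real.norm_of_nonneg h

lemma summableB (ρ : State (Hd d A q)) :
    Summable (Function.uncurry fun (k : ℕ) (w' : Rst d A q S) =>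
      (ρ.p k : ℂ) * (inner ℂ (ρ.ψ k) (M (blk S w' (ρ.ψ k))) : ℂ)) := by
  have hslice : ∀ k, Summable (fun w' : Rst d A q S =>
      ‖(ρ.p k : ℂ) * (inner ℂ (ρ.ψ k) (M (blk S w' (ρ.ψ k))) : ℂ)‖) := by
    intro k
    have hbound : Summable (fun w' : Rst d A q S =>
        ρ.p k * ((1/2) * (‖blk S w' ((ContinuousLinearMap.adjoint M) (ρ.ψ k))‖^2
          + ‖blk S w' (ρ.ψ k)‖^2))) :=
      (( ((hasSum_blk_normSq ((ContinuousLinearMap.adjoint M) (ρ.ψ k))).summable.add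
        (hasSum_blk_normSq (ρ.ψ k)).summable).mul_left (1/2)).mul_left (ρ.p k))
    refine Summable.of_nonneg_of_le (fun w' => norm_nonneg _) (fun w' => ?_) hbound
    rw [norm_mul, pnormC _ (ρ.nonneg k)]
    exact mul_le_mul_of_nonneg_left (abs_inner_M_blk_le w' (ρ.ψ k)) (ρ.nonneg k)
  apply Summable.of_norm
  refine (summable_prod_of_nonneg (fun _ => norm_nonneg _)).2 ⟨hslice, ?_⟩
  set C := (1/2) * (‖(ContinuousLinearMap.adjoint M)‖^2 + 1) with hC
  refine Summable.of_nonneg_of_le (fun k => tsum_nonneg fun w' => norm_nonneg _)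
    (fun k => ?_) (ρ.sum_one.summable.mul_right C)
  by_cases hk : ρ.p k = 0
  · simp [hk]
  · have hψ : ‖ρ.ψ k‖ = 1 := state_norm ρ k hk
    have hMψ : ‖(ContinuousLinearMap.adjoint M) (ρ.ψ k)‖ ≤ ‖(ContinuousLinearMap.adjoint M)‖ := by
      have h5 := ContinuousLinearMap.le_opNorm (ContinuousLinearMap.adjoint M) (ρ.ψ k)
      rwa [hψ, mul_one] at h5
    have hb : ∀ w' : Rst d A q S,
        ‖(ρ.p k : ℂ) * (inner ℂ (ρ.ψ k) (M (blk S w' (ρ.ψ k))) : ℂ)‖ ≤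
        ρ.p k * ((1/2) * (‖blk S w' ((ContinuousLinearMap.adjoint M) (ρ.ψ k))‖^2
          + ‖blk S w' (ρ.ψ k)‖^2)) := by
      intro w'
      rw [norm_mul, pnormC _ (ρ.nonneg k)]
      exact mul_le_mul_of_nonneg_left (abs_inner_M_blk_le w' (ρ.ψ k)) (ρ.nonneg k)
    have hsum2 : Summable (fun w' : Rst d A q S =>
        ρ.p k * ((1/2) * (‖blk S w' ((ContinuousLinearMap.adjoint M) (ρ.ψ k))‖^2
          + ‖blk S w' (ρ.ψ k)‖^2))) :=
      (( ((hasSum_blk_normSq ((ContinuousLinearMap.adjoint M) (ρ.ψ k))).summable.add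
        (hasSum_blk_normSq (ρ.ψ k)).summable).mul_left (1/2)).mul_left (ρ.p k))
    calc ∑' w', ‖(ρ.p k : ℂ) * (inner ℂ (ρ.ψ k) (M (blk S w' (ρ.ψ k))) : ℂ)‖
        ≤ ∑' w' : Rst d A q S, ρ.p k * ((1/2) *
            (‖blk S w' ((ContinuousLinearMap.adjoint M) (ρ.ψ k))‖^2
              + ‖blk S w' (ρ.ψ k)‖^2)) := Summable.tsum_le_tsum hb (hslice k) hsum2
      _ = ρ.p k * ((1/2) * (‖(ContinuousLinearMap.adjoint M) (ρ.ψ k)‖^2 + ‖ρ.ψ k‖^2)) := by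
          rw [tsum_mul_left, tsum_mul_left,
            Summable.tsum_add (hasSum_blk_normSq _).summable (hasSum_blk_normSq _).summable,
            (hasSum_blk_normSq _).tsum_eq, (hasSum_blk_normSq _).tsum_eq]
      _ ≤ ρ.p k * C := by
          rw [hC, hψ]
          have hsq : ‖(ContinuousLinearMap.adjoint M) (ρ.ψ k)‖^2 ≤
              ‖ContinuousLinearMap.adjoint M‖^2 := by
            nlinarith [norm_nonneg ((ContinuousLinearMap.adjoint M) (ρ.ψ k))]
          have h0 := ρ.nonneg k
          nlinarith [mul_nonneg h0 (sub_nonneg.2 hsq)]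

lemma stepB (ρ : State (Hd d A q)) :
    ∑' k, (ρ.p k : ℂ) * (inner ℂ (ρ.ψ k) (M (ρ.ψ k)) : ℂ)
      = ∑' w' : Rst d A q S, ∑' k, (ρ.p k : ℂ) *
          (inner ℂ (ρ.ψ k) (M (blk S w' (ρ.ψ k))) : ℂ) := by
  have h1 : ∀ k, (ρ.p k : ℂ) * (inner ℂ (ρ.ψ k) (M (ρ.ψ k)) : ℂ) =
      ∑' w' : Rst d A q S, (ρ.p k : ℂ) * (inner ℂ (ρ.ψ k) (M (blk S w' (ρ.ψ k))) : ℂ) := by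
    intro k
    rw [← (hasSum_inner_M_blk (M := M) (S := S) (ρ.ψ k) (ρ.ψ k)).tsum_eq, tsum_mul_left]
  rw [tsum_congr h1]
  exact (Summable.tsum_comm' (summableB ρ) (fun k => (summableB ρ).prod_factor k)
    (fun w' => ((summableB ρ).prod_symm.prod_factor w'))).symm

lemma conj_redFam (p : ℕ → ℝ) (ψ : ℕ → Hd d A q) (S : Set (Fin d → ℤ))
    (w w' : Rst d A q S) :
    conj (redFam p ψ S w w') =
      ∑' k, ((p k : ℝ) : ℂ) * (∑' v, conj (ψ k (glue w v)) * ψ k (glue w' v)) := by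
  rw [redFam]
  simp only [starRingEnd_apply]
  rw [tsum_star]
  refine tsum_congr fun k => ?_
  rw [star_mul']
  congr 1
  · rw [← starRingEnd_apply, Complex.conj_ofReal]
  · rw [tsum_star]
    refine tsum_congr fun v => ?_
    rw [star_mul']
    simp only [star_star, starRingEnd_apply]

/-- Reindexing equivalence. -/
def eqv (S : Set (Fin d → ℤ)) :
    (Rst d A q S × (ℕ × Rst d A q Sᶜ)) ≃ (ℕ × (Rst d A q S × Rst d A q Sᶜ)) where
  toFun y := (y.2.1, (y.1, y.2.2))
  invFun x := (x.2.1, (x.1, x.2.2))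
  left_inv y := rfl
  right_inv x := rfl

lemma summableC (hm : IsLoc M S m) (ρ : State (Hd d A q)) (w' : Rst d A q S) :
    Summable (fun x : ℕ × (Rst d A q S × Rst d A q Sᶜ) =>
      (ρ.p x.1 : ℂ) * (conj (ρ.ψ x.1 (glue x.2.1 x.2.2)) *
        (m x.2.1 w' * ρ.ψ x.1 (glue w' x.2.2)))) := by
  have hslice : ∀ k : ℕ, Summable (fun pr : Rst d A q S × Rst d A q Sᶜ =>
      ‖(ρ.p k : ℂ) * (conj (ρ.ψ k (glue pr.1 pr.2)) * (m pr.1 w' * ρ.ψ k (glue w' pr.2)))‖) := by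
    intro k
    have h2 := (summable_norm_iff.2 (summable_inner_blk hm (ρ.ψ k) (ρ.ψ k) w')).mul_left
      ‖((ρ.p k : ℝ) : ℂ)‖
    exact h2.congr fun pr => (norm_mul _ _).symm
  have hXc : ∀ (k : ℕ) (pr : Rst d A q S × Rst d A q Sᶜ),
      ‖conj (ρ.ψ k (glue pr.1 pr.2)) * (m pr.1 w' * ρ.ψ k (glue w' pr.2))‖ =
      ‖(ρ.ψ k) ((cfe S) pr)‖ * ‖(M (blk S w' (ρ.ψ k))) ((cfe S) pr)‖ := by
    intro k pr
    have h6 : (M (blk S w' (ρ.ψ k))) ((cfe S) pr) = m pr.1 w' * ρ.ψ k (glue w' pr.2) := by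
      simp only [cfe, Equiv.coe_fn_mk]
      rw [M_blk_apply hm, restr_glue, restr_compl_glue]
    rw [h6, norm_mul, RCLike.norm_conj]
    congr 1
  apply Summable.of_norm
  refine (summable_prod_of_nonneg (fun _ => norm_nonneg _)).2 ⟨hslice, ?_⟩
  set C₂ := (1/2) * (1 + (‖M‖^2)) with hC₂
  refine Summable.of_nonneg_of_le (fun k => tsum_nonneg fun pr => norm_nonneg _)
    (fun k => ?_) (ρ.sum_one.summable.mul_right C₂)
  by_cases hk : ρ.p k = 0
  · simp [hk]
  · have hψ : ‖ρ.ψ k‖ = 1 := state_norm ρ k hk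
    have hprod : Summable (fun c : Cf d A q => ‖(ρ.ψ k) c‖ * ‖(M (blk S w' (ρ.ψ k))) c‖) := by
      have h7 := summable_norm_iff.2 (summable_conj_mul (ρ.ψ k) (M (blk S w' (ρ.ψ k))))
      exact h7.congr fun c => by rw [norm_mul, RCLike.norm_conj]
    have hsq : Summable (fun c : Cf d A q =>
        (1/2) * (‖(ρ.ψ k) c‖^2 + ‖(M (blk S w' (ρ.ψ k))) c‖^2)) :=
      ((hasSum_normSq (ρ.ψ k)).summable.add (hasSum_normSq (M (blk S w' (ρ.ψ k)))).summable).mul_left _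
    calc ∑' pr : Rst d A q S × Rst d A q Sᶜ,
          ‖(ρ.p k : ℂ) * (conj (ρ.ψ k (glue pr.1 pr.2)) * (m pr.1 w' * ρ.ψ k (glue w' pr.2)))‖
        = ρ.p k * ∑' pr : Rst d A q S × Rst d A q Sᶜ,
            ‖(ρ.ψ k) ((cfe S) pr)‖ * ‖(M (blk S w' (ρ.ψ k))) ((cfe S) pr)‖ := by
          rw [← tsum_mul_left]
          refine tsum_congr fun pr => ?_
          rw [norm_mul, pnormC _ (ρ.nonneg k), hXc k pr]
      _ = ρ.p k * ∑' c : Cf d A q, ‖(ρ.ψ k) c‖ * ‖(M (blk S w' (ρ.ψ k))) c‖ := by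
          rw [(cfe S).tsum_eq (fun c => ‖(ρ.ψ k) c‖ * ‖(M (blk S w' (ρ.ψ k))) c‖)]
      _ ≤ ρ.p k * ∑' c : Cf d A q,
            (1/2) * (‖(ρ.ψ k) c‖^2 + ‖(M (blk S w' (ρ.ψ k))) c‖^2) := by
          refine mul_le_mul_of_nonneg_left (Summable.tsum_le_tsum (fun c => ?_) hprod hsq) (ρ.nonneg k)
          nlinarith [norm_nonneg ((ρ.ψ k) c), norm_nonneg ((M (blk S w' (ρ.ψ k))) c),
            sq_nonneg (‖(ρ.ψ k) c‖ - ‖(M (blk S w' (ρ.ψ k))) c‖)]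
      _ = ρ.p k * ((1/2) * (‖ρ.ψ k‖^2 + ‖M (blk S w' (ρ.ψ k))‖^2)) := by
          rw [tsum_mul_left, Summable.tsum_add (hasSum_normSq _).summable (hasSum_normSq _).summable,
            (hasSum_normSq _).tsum_eq, (hasSum_normSq _).tsum_eq]
      _ ≤ ρ.p k * C₂ := by
          rw [hC₂, hψ]
          have h8 : ‖M (blk S w' (ρ.ψ k))‖ ≤ ‖M‖ := by
            have h9 := M.le_opNorm (blk S w' (ρ.ψ k))
            have h10 : ‖blk S w' (ρ.ψ k)‖ ≤ 1 := hψ ▸ norm_blk_le w' (ρ.ψ k)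
            have h11 : ‖M‖ * ‖blk S w' (ρ.ψ k)‖ ≤ ‖M‖ * 1 :=
              mul_le_mul_of_nonneg_left h10 (norm_nonneg M)
            linarith
          have hsq2 : ‖M (blk S w' (ρ.ψ k))‖^2 ≤ ‖M‖^2 := by
            nlinarith [norm_nonneg (M (blk S w' (ρ.ψ k)))]
          have h0 := ρ.nonneg k
          nlinarith [mul_nonneg h0 (sub_nonneg.2 hsq2)]

lemma stepC (hm : IsLoc M S m) (ρ : State (Hd d A q)) (w' : Rst d A q S) :
    ∑' k, (ρ.p k : ℂ) * (inner ℂ (ρ.ψ k) (M (blk S w' (ρ.ψ k))) : ℂ)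
      = ∑' w, m w w' * conj (redFam ρ.p ρ.ψ S w w') := by
  set F : ℕ × (Rst d A q S × Rst d A q Sᶜ) → ℂ := fun x =>
    (ρ.p x.1 : ℂ) * (conj (ρ.ψ x.1 (glue x.2.1 x.2.2)) *
      (m x.2.1 w' * ρ.ψ x.1 (glue w' x.2.2))) with hF
  have hFsum : Summable F := summableC hm ρ w'
  have h1 : ∀ k, (ρ.p k : ℂ) * (inner ℂ (ρ.ψ k) (M (blk S w' (ρ.ψ k))) : ℂ) =
      ∑' pr : Rst d A q S × Rst d A q Sᶜ, F (k, pr) := by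
    intro k
    rw [inner_M_blk_prod hm, ← tsum_mul_left]
  rw [tsum_congr h1, ← Summable.tsum_prod hFsum, ← Equiv.tsum_eq (eqv S) F]
  have hsum2 : Summable (fun y : Rst d A q S × (ℕ × Rst d A q Sᶜ) => F ((eqv S) y)) :=
    (Equiv.summable_iff (eqv S)).2 hFsum
  rw [Summable.tsum_prod hsum2]
  refine tsum_congr fun w => ?_
  have hsum3 : Summable (fun kv : ℕ × Rst d A q Sᶜ => F ((eqv S) (w, kv))) :=
    hsum2.prod_factor w
  rw [Summable.tsum_prod hsum3, conj_redFam, ← tsum_mul_left]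
  refine tsum_congr fun k => ?_
  rw [← tsum_mul_left, ← tsum_mul_left]
  refine tsum_congr fun v => ?_
  simp only [hF, eqv, Equiv.coe_fn_mk]
  ring

lemma backward (G : Hd d A q →L[ℂ] Hd d A q)
    (hB2 : ∀ B : Hd d A q →L[ℂ] Hd d A q, Localized B 𝒜 →
      Localized ((ContinuousLinearMap.adjoint G).comp (B.comp G)) S)
    (ρ ρ' : State (Hd d A q)) (hred : reduct ρ S = reduct ρ' S) :
    redApply G ρ 𝒜 = redApply G ρ' 𝒜 := by
  funext u u'
  obtain ⟨m, hm⟩ := hB2 (Bop u u')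
    ⟨fun w w'' => if w = u' ∧ w'' = u then 1 else 0, isLoc_Bop u u'⟩
  have hm : IsLoc ((ContinuousLinearMap.adjoint G).comp ((Bop u u').comp G)) S m := hm
  have key : ∀ ρ₀ : State (Hd d A q), redApply G ρ₀ 𝒜 u u' =
      ∑' w', ∑' w, m w w' * conj (reduct ρ₀ S w w') := by
    intro ρ₀
    have h1 : redApply G ρ₀ 𝒜 u u' = ∑' k, (ρ₀.p k : ℂ) *
        (inner ℂ (ρ₀.ψ k) (((ContinuousLinearMap.adjoint G).comp
          ((Bop u u').comp G)) (ρ₀.ψ k)) : ℂ) := by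
      rw [redApply, redFam]
      refine tsum_congr fun k => ?_
      congr 1
      rw [inner_conjM, inner_Bop]
      rfl
    rw [h1, stepB ρ₀]
    exact tsum_congr fun w' => stepC hm ρ₀ w'
  rw [key ρ, key ρ', hred]

end Mixture
end LocalProof






/-- locality at `𝒜` with neighbourhood `𝒩` (condition (i)) is equivalent to:
for every bounded operator `B` localized in `𝒜`, `G† B G` is localized in `𝒜 + 𝒩`. -/
theorem localAt_iff_adjoint_conj_localized
    {d : ℕ} (hd : 0 < d) {A : Type} [Fintype A] {q : A}
    (G : Hd d A q →L[ℂ] Hd d A q) (𝒜 𝒩 : Set (Fin d → ℤ)) (h𝒩 : 𝒩.Finite) :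
    LocalAt G 𝒜 𝒩 ↔
      ∀ B : Hd d A q →L[ℂ] Hd d A q, Localized B 𝒜 →
        Localized ((ContinuousLinearMap.adjoint G).comp (B.comp G)) (𝒜 + 𝒩) := by
  constructor
  · intro h B hB
    exact LocalProof.forward G (fun ρ ρ' hr => h ρ ρ' hr) hB
  · intro h ρ ρ' hr
    exact LocalProof.backward G h ρ ρ' hr

end
end

section
/- Let F be a cellular automaton on finite configurations in dimension d. If F is not injective, then for every natural number n there exists a finite configuration w such that the set {u ∈ C_f : F(u) = w} has at least n elements. -/
open scoped Pointwise ComplexConjugate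
open Classical

noncomputable section

variable (d : ℕ) (A : Type) (q : A)

variable {d A q}

section Helper

variable {d : ℕ} {A : Type} {q : A} {n : ℕ}

/-- Patch together translated copies of patterns `g j` on the regions `t j + D`. -/
def patch (t : Fin n → (Fin d → ℤ)) (D : Set (Fin d → ℤ)) (g : Fin n → Cf d A q) :
    (Fin d → ℤ) → A :=
  fun i => if h : ∃ j : Fin n, i - t j ∈ D then (g h.choose).1 (i - t h.choose) else q

lemma patch_eq (t : Fin n → (Fin d → ℤ)) (D : Set (Fin d → ℤ)) (g : Fin n → Cf d A q)
    (huniq : ∀ (i : Fin d → ℤ) (j j' : Fin n), i - t j ∈ D → i - t j' ∈ D → j = j')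
    {i : Fin d → ℤ} {j : Fin n} (hj : i - t j ∈ D) :
    patch t D g i = (g j).1 (i - t j) := by
  have hex : ∃ j' : Fin n, i - t j' ∈ D := ⟨j, hj⟩
  have hch : hex.choose = j := huniq i _ j hex.choose_spec hj
  simp only [patch, dif_pos hex, hch]

lemma patch_q (t : Fin n → (Fin d → ℤ)) (D : Set (Fin d → ℤ)) (g : Fin n → Cf d A q)
    {i : Fin d → ℤ} (h : ∀ j : Fin n, i - t j ∉ D) :
    patch t D g i = q := by
  simp only [patch, dif_neg (not_exists.mpr h)]

end Helper

/-- if a cellular automaton `F` is not injective, then for every `n` there is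
a finite configuration having at least `n` preimages. -/
theorem not_injective_CA_unbounded_preimages
    {d : ℕ} (hd : 0 < d) {A : Type} [Fintype A] {q : A}
    (F : Cf d A q → Cf d A q) (hCA : IsCA F) (hninj : ¬ Function.Injective F) :
    ∀ n : ℕ, ∃ w : Cf d A q, ∃ s : Finset (Cf d A q),
      n ≤ s.card ∧ ∀ u ∈ s, F u = w := by
  classical
  obtain ⟨N, hN, f, hfq, hF⟩ := hCA
  obtain ⟨x, y, hxy, hne⟩ := Function.not_injective_iff.mp hninj
  have hxyfun : x.1 ≠ y.1 := fun h => hne (Subtype.ext h)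
  obtain ⟨i₀, hi₀⟩ := Function.ne_iff.mp hxyfun
  intro n
  -- the difference set
  set D : Set (Fin d → ℤ) := {i | x.1 i ≠ q} ∪ {i | y.1 i ≠ q} with hDdef
  have hD : D.Finite := x.2.union y.2
  have hi₀D : i₀ ∈ D := by
    by_contra h
    simp only [hDdef, Set.mem_union, Set.mem_setOf_eq, not_or, not_not] at h
    exact hi₀ (h.1.trans h.2.symm)
  have hqD : ∀ i, i ∉ D → x.1 i = q ∧ y.1 i = q := by
    intro i hi
    simp only [hDdef, Set.mem_union, Set.mem_setOf_eq, not_or, not_not] at hi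
    exact hi
  -- the enlarged set that must be separated
  set E : Set (Fin d → ℤ) := D ∪ (D - N) with hEdef
  have hE : E.Finite := hD.union (hD.sub hN)
  have hDE : D ⊆ E := Set.subset_union_left
  have hDNE : ∀ a ∈ D, ∀ m ∈ N, a - m ∈ E :=
    fun a ha m hm => Set.subset_union_right (Set.sub_mem_sub ha hm)
  -- a bound on the first coordinates of E
  set π : (Fin d → ℤ) → ℤ := fun i => i ⟨0, hd⟩ with hπdef
  set B : ℕ := hE.toFinset.sup (fun a => (π a).natAbs) with hBdef
  have hB : ∀ a ∈ E, |π a| ≤ (B : ℤ) := by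
    intro a ha
    have h1 : (π a).natAbs ≤ B := Finset.le_sup (f := fun a => (π a).natAbs)
      (hE.mem_toFinset.mpr ha)
    rw [Int.abs_eq_natAbs]
    exact_mod_cast h1
  -- the translations
  set t : Fin n → (Fin d → ℤ) :=
    fun j k => if k = ⟨0, hd⟩ then (j : ℤ) * (2 * B + 1) else 0 with htdef
  have hdisj : ∀ (j j' : Fin n) (a a' : Fin d → ℤ), a ∈ E → a' ∈ E →
      t j + a = t j' + a' → j = j' := by
    intro j j' a a' ha ha' heq
    have h1 := congrFun heq ⟨0, hd⟩
    simp only [htdef, Pi.add_apply, if_pos rfl, if_true] at h1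
    have hb := abs_le.mp (hB a ha)
    have hb' := abs_le.mp (hB a' ha')
    have hpa : π a = a ⟨0, hd⟩ := rfl
    have hpa' : π a' = a' ⟨0, hd⟩ := rfl
    rw [hpa] at hb
    rw [hpa'] at hb'
    have hBpos : (0 : ℤ) ≤ 2 * (B : ℤ) + 1 := by positivity
    have hjj : (j : ℤ) = (j' : ℤ) := by
      rcases lt_trichotomy ((j : ℕ) : ℤ) ((j' : ℕ) : ℤ) with h | h | h
      · nlinarith [mul_le_mul_of_nonneg_right (Int.add_one_le_iff.mpr h) hBpos,
          hb.1, hb.2, hb'.1, hb'.2]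
      · exact h
      · nlinarith [mul_le_mul_of_nonneg_right (Int.add_one_le_iff.mpr h) hBpos,
          hb.1, hb.2, hb'.1, hb'.2]
    exact Fin.ext (by exact_mod_cast hjj)
  have huniq : ∀ (i : Fin d → ℤ) (j j' : Fin n), i - t j ∈ D → i - t j' ∈ D → j = j' := by
    intro i j j' h h'
    exact hdisj j j' _ _ (hDE h) (hDE h') (by abel)
  -- patterns
  set z : Bool → Cf d A q := fun s => bif s then x else y with hzdef
  have hzq : ∀ (s : Bool) (i : Fin d → ℤ), i ∉ D → (z s).1 i = q := by
    intro s i hi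
    cases s
    · exact (hqD i hi).2
    · exact (hqD i hi).1
  -- the glued configurations
  have hsupp : ∀ b : Fin n → Bool, {i | patch t D (fun j => z (b j)) i ≠ q}.Finite := by
    intro b
    apply Set.Finite.subset (Set.finite_iUnion (fun j : Fin n => hD.image (· + t j)))
    intro i hi
    rcases Classical.em (∃ j : Fin n, i - t j ∈ D) with ⟨j, hj⟩ | h
    · exact Set.mem_iUnion.mpr ⟨j, ⟨i - t j, hj, sub_add_cancel _ _⟩⟩
    · exact absurd (patch_q t D _ (not_exists.mp h)) hi
  let c : (Fin n → Bool) → Cf d A q := fun b => ⟨patch t D (fun j => z (b j)), hsupp b⟩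
  -- all glued configurations have the same image
  have key : ∀ (b : Fin n → Bool) (i : Fin d → ℤ) (j : Fin n),
      (∃ m ∈ N, i + m - t j ∈ D) → (F (c b)).1 i = (F x).1 (i - t j) := by
    intro b i j ⟨m, hm, hmD⟩
    have hjE : i - t j ∈ E := by
      have := hDNE _ hmD m hm
      have heq : i + m - t j - m = i - t j := by abel
      rwa [heq] at this
    have hA : ∀ nn : N, patch t D (fun j' => z (b j')) (i + nn.1) =
        (z (b j)).1 (i + nn.1 - t j) := by
      intro nn
      rcases Classical.em (i + nn.1 - t j ∈ D) with hin | hout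
      · exact patch_eq t D _ huniq hin
      · have h1 : ∀ j' : Fin n, i + nn.1 - t j' ∉ D := by
          intro j' hj'
          have hj'E : i - t j' ∈ E := by
            have := hDNE _ hj' nn.1 nn.2
            have heq : i + nn.1 - t j' - nn.1 = i - t j' := by abel
            rwa [heq] at this
          have := hdisj j j' _ _ hjE hj'E (by abel)
          exact hout (this ▸ hj')
        rw [patch_q t D _ h1, hzq _ _ hout]
    calc (F (c b)).1 i = f (fun nn => (c b).1 (i + nn.1)) := hF _ i
      _ = f (fun nn => (z (b j)).1 ((i - t j) + nn.1)) := by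
          refine congrArg f (funext fun nn => ?_)
          have := hA nn
          have heq : i + nn.1 - t j = (i - t j) + nn.1 := by abel
          rw [heq] at this
          exact this
      _ = (F (z (b j))).1 (i - t j) := (hF _ _).symm
      _ = (F x).1 (i - t j) := by
          cases hbj : b j
          · simp only [hzdef, cond_false]
            exact congrFun (congrArg Subtype.val hxy.symm) _
          · simp only [hzdef, cond_true]
  have keyq : ∀ (b : Fin n → Bool) (i : Fin d → ℤ),
      (∀ j : Fin n, ∀ m ∈ N, i + m - t j ∉ D) → (F (c b)).1 i = q := by
    intro b i h
    calc (F (c b)).1 i = f (fun nn => (c b).1 (i + nn.1)) := hF _ i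
      _ = f (fun _ => q) := congrArg f (funext fun nn =>
          patch_q t D (fun j => z (b j)) (fun j => h j nn.1 nn.2))
      _ = q := hfq
  have hFeq : ∀ b b' : Fin n → Bool, F (c b) = F (c b') := by
    intro b b'
    apply Subtype.ext
    funext i
    rcases Classical.em (∃ j : Fin n, ∃ m ∈ N, i + m - t j ∈ D) with ⟨j, hj⟩ | h
    · rw [key b i j hj, key b' i j hj]
    · push_neg at h
      rw [keyq b i h, keyq b' i h]
  -- the glued configurations are pairwise distinct
  have hcinj : Function.Injective c := by
    intro b b' h
    by_contra hbb
    obtain ⟨j, hj⟩ := Function.ne_iff.mp hbb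
    have hmem : t j + i₀ - t j ∈ D := by
      have heq : t j + i₀ - t j = i₀ := by abel
      rwa [heq]
    have h1 : (c b).1 (t j + i₀) = (z (b j)).1 i₀ := by
      have := patch_eq t D (fun j' => z (b j')) huniq hmem
      have heq : t j + i₀ - t j = i₀ := by abel
      rwa [heq] at this
    have h2 : (c b').1 (t j + i₀) = (z (b' j)).1 i₀ := by
      have := patch_eq t D (fun j' => z (b' j')) huniq hmem
      have heq : t j + i₀ - t j = i₀ := by abel
      rwa [heq] at this
    have h3 : (z (b j)).1 i₀ = (z (b' j)).1 i₀ := by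
      rw [← h1, ← h2, h]
    cases hb : b j <;> cases hb' : b' j
    · exact hj (hb.trans hb'.symm)
    · rw [hb, hb'] at h3
      simp only [hzdef, cond_false, cond_true] at h3
      exact hi₀ h3.symm
    · rw [hb, hb'] at h3
      simp only [hzdef, cond_false, cond_true] at h3
      exact hi₀ h3
    · exact hj (hb.trans hb'.symm)
  refine ⟨F (c fun _ => true), Finset.univ.image c, ?_, ?_⟩
  · rw [Finset.card_image_of_injective _ hcinj, Finset.card_univ]
    have : Fintype.card (Fin n → Bool) = 2 ^ n := by simp
    rw [this]
    exact (Nat.lt_two_pow_self (n := n)).le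
  · intro u hu
    obtain ⟨b, _, rfl⟩ := Finset.mem_image.mp hu
    exact hFeq b _

end
end

section
/- Let F be a cellular automaton on finite configurations in dimension d. If F is not injective, then there is no continuous (bounded) linear map G : H → H satisfying G e_c = e_{F(c)} for all c ∈ C_f. -/
open scoped Pointwise ComplexConjugate
open Classical

noncomputable section

variable (d : ℕ) (A : Type) (q : A)

variable {d A q}

/-- The canonical basis vectors form an orthonormal family. -/
private lemma e_orthonormal : Orthonormal ℂ (e : Cf d A q → Hd d A q) := by
  rw [orthonormal_iff_ite]
  intro c c'
  rw [e, e, lp.inner_single_left]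
  by_cases h : c = c'
  · subst h
    simp [lp.single_apply_self]
  · have h0 : (lp.single (E := fun _ : Cf d A q => ℂ) 2 c' 1) c = 0 :=
      lp.single_apply_ne 2 c' 1 h
    rw [h0, if_neg h, inner_zero_right]

/-- Combination of several translated copies of finite configurations
(`w j` translated by `v j`, for `j < m`). -/
private def combo (v : ℕ → (Fin d → ℤ)) (K : Set (Fin d → ℤ)) (hK : K.Finite)
    (w : ℕ → Cf d A q) (m : ℕ) : Cf d A q :=
  ⟨fun i => if h : ∃ j, j < m ∧ i - v j ∈ K then (w h.choose).1 (i - v h.choose) else q, by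
    apply Set.Finite.subset
      (Set.Finite.biUnion (Set.finite_Iio m) (fun j _ => hK.image (· + v j)))
    intro i hi
    simp only [Set.mem_setOf_eq] at hi
    by_cases h : ∃ j, j < m ∧ i - v j ∈ K
    · obtain ⟨hjm, hjK⟩ := h.choose_spec
      exact Set.mem_biUnion hjm ⟨i - v h.choose, hjK, sub_add_cancel i (v h.choose)⟩
    · exact absurd (dif_neg h) hi⟩

private lemma combo_apply {v : ℕ → Fin d → ℤ} {K : Set (Fin d → ℤ)} (hK : K.Finite)
    (w : ℕ → Cf d A q) {m : ℕ}
    (hdisj : ∀ j j' : ℕ, ∀ i : Fin d → ℤ, i - v j ∈ K → i - v j' ∈ K → j = j')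
    {j : ℕ} (hj : j < m) {i : Fin d → ℤ} (hi : i - v j ∈ K) :
    (combo v K hK w m).1 i = (w j).1 (i - v j) := by
  have h : ∃ j, j < m ∧ i - v j ∈ K := ⟨j, hj, hi⟩
  have hspec := h.choose_spec
  have hjj : h.choose = j := hdisj _ _ i hspec.2 hi
  show dite _ _ _ = _
  rw [dif_pos h, hjj]

private lemma combo_apply_q {v : ℕ → Fin d → ℤ} {K : Set (Fin d → ℤ)} (hK : K.Finite)
    (w : ℕ → Cf d A q) {m : ℕ} {i : Fin d → ℤ}
    (hnot : ¬ ∃ j, j < m ∧ i - v j ∈ K) :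
    (combo v K hK w m).1 i = q :=
  dif_neg hnot

/-- if a cellular automaton `F` is not injective, then there is no bounded
linear map `G` on `H` with `G e_c = e_{F c}` for all finite configurations `c`. -/
theorem not_injective_CA_no_bounded_linearization
    {d : ℕ} (hd : 0 < d) {A : Type} [Fintype A] {q : A}
    (F : Cf d A q → Cf d A q) (hCA : IsCA F) (hninj : ¬ Function.Injective F) :
    ¬ ∃ G : Hd d A q →L[ℂ] Hd d A q, ∀ c, G (e c) = e (F c) := by
  rintro ⟨G, hG⟩
  obtain ⟨N, hNfin, f, hfq, hf⟩ := hCA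
  rw [Function.not_injective_iff] at hninj
  obtain ⟨c, c', hFcc, hne⟩ := hninj
  have hne1 : c.1 ≠ c'.1 := fun h => hne (Subtype.ext h)
  obtain ⟨i0, hi0⟩ := Function.ne_iff.mp hne1
  set z0 : Fin d := ⟨0, hd⟩ with hz0
  set K : Set (Fin d → ℤ) := {i | c.1 i ≠ q} ∪ {i | c'.1 i ≠ q} with hKdef
  have hKfin : K.Finite := c.2.union c'.2
  have hcK : {i | c.1 i ≠ q} ⊆ K := Set.subset_union_left
  have hc'K : {i | c'.1 i ≠ q} ⊆ K := Set.subset_union_right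
  have hi0K : i0 ∈ K := by
    by_contra h
    rw [hKdef, Set.mem_union, Set.mem_setOf_eq, Set.mem_setOf_eq] at h
    push_neg at h
    exact hi0 (h.1.trans h.2.symm)
  -- a bound on the 0-th coordinates of points of `K ∪ N`
  obtain ⟨R0, hR0⟩ := ((hKfin.union hNfin).image (fun i => |i z0|)).bddAbove
  set R : ℤ := max R0 0 with hRdef
  have hR : ∀ i ∈ K ∪ N, |i z0| ≤ R := fun i hi =>
    le_trans (hR0 (Set.mem_image_of_mem _ hi)) (le_max_left _ _)
  have hR0' : (0 : ℤ) ≤ R := le_max_right _ _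
  set M : ℤ := 5 * R + 1 with hMdef
  set v : ℕ → (Fin d → ℤ) := fun j t => if t = z0 then M * j else 0 with hvdef
  have hvz0 : ∀ j : ℕ, v j z0 = M * j := fun j => if_pos rfl
  -- separation lemma
  have haux : ∀ (j j' : ℕ) (a b : ℤ), |a| ≤ 2 * R → |b| ≤ 2 * R →
      a + M * j = b + M * j' → j = j' := by
    intro j j' a b ha hb hab
    have ha' := abs_le.mp ha
    have hb' := abs_le.mp hb
    by_contra hjj
    have hM : (0 : ℤ) < M := by omega
    have h2 : M * ((j : ℤ) - j') = b - a := by linarith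
    have h3 : (1 : ℤ) ≤ (j : ℤ) - j' ∨ (j : ℤ) - j' ≤ -1 := by omega
    rcases h3 with h3 | h3
    · linarith [mul_le_mul_of_nonneg_left h3 hM.le]
    · linarith [mul_le_mul_of_nonneg_left h3 hM.le]
  have htri : ∀ x y : ℤ, |x| ≤ R → |y| ≤ R → |x - y| ≤ 2 * R := by
    intro x y hx hy
    have hx' := abs_le.mp hx
    have hy' := abs_le.mp hy
    exact abs_le.mpr (by omega)
  have hwk : ∀ x : ℤ, |x| ≤ R → |x| ≤ 2 * R := by
    intro x hx
    have hx' := abs_le.mp hx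
    exact abs_le.mpr (by omega)
  have hdisj0 : ∀ j j' : ℕ, ∀ i : Fin d → ℤ, i - v j ∈ K → i - v j' ∈ K → j = j' := by
    intro j j' i hj hj'
    have h1 : |i z0 - M * j| ≤ R := by
      have := hR _ (Or.inl hj)
      simpa [Pi.sub_apply, hvz0] using this
    have h2 : |i z0 - M * j'| ≤ R := by
      have := hR _ (Or.inl hj')
      simpa [Pi.sub_apply, hvz0] using this
    exact haux j j' (i z0 - M * j) (i z0 - M * j') (hwk _ h1) (hwk _ h2) (by ring)
  have hdisjN : ∀ (j j' : ℕ) (i n n' : Fin d → ℤ), n ∈ N → n' ∈ N →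
      i + n - v j ∈ K → i + n' - v j' ∈ K → j = j' := by
    intro j j' i n n' hn hn' hj hj'
    have h1 : |i z0 + n z0 - M * j| ≤ R := by
      have := hR _ (Or.inl hj)
      simpa [Pi.sub_apply, Pi.add_apply, hvz0] using this
    have h2 : |i z0 + n' z0 - M * j'| ≤ R := by
      have := hR _ (Or.inl hj')
      simpa [Pi.sub_apply, Pi.add_apply, hvz0] using this
    have h3 : |n z0| ≤ R := hR _ (Or.inr hn)
    have h4 : |n' z0| ≤ R := hR _ (Or.inr hn')
    exact haux j j' (i z0 + n z0 - M * j - n z0) (i z0 + n' z0 - M * j' - n' z0)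
      (htri _ _ h1 h3) (htri _ _ h2 h4) (by ring)
  -- the main claim: for every `m`, `m ≤ ‖G‖ ^ 2`
  have key : ∀ m : ℕ, (m : ℝ) ≤ ‖G‖ ^ 2 := by
    intro m
    rcases Nat.eq_zero_or_pos m with hm | hm
    · subst hm
      simp only [Nat.cast_zero]
      exact sq_nonneg _
    -- the family of configurations
    set w : (ℕ → Bool) → ℕ → Cf d A q := fun s j => if s j then c' else c with hwdef
    have hw : ∀ (s : ℕ → Bool) (j : ℕ), {i | (w s j).1 i ≠ q} ⊆ K := by
      intro s j
      by_cases h : s j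
      · simp only [hwdef, if_pos h]; exact hc'K
      · simp only [hwdef, if_neg h]; exact hcK
    have hFw : ∀ (s : ℕ → Bool) (j : ℕ), F (w s j) = F c := by
      intro s j
      by_cases h : s j
      · simp only [hwdef, if_pos h]; exact hFcc.symm
      · simp only [hwdef, if_neg h]
    set X : (ℕ → Bool) → Cf d A q := fun s => combo v K hKfin (w s) m with hXdef
    -- all configurations in the family have the same image
    have himg : ∀ s s' : ℕ → Bool, F (X s) = F (X s') := by
      have main : ∀ (s : ℕ → Bool) (i : Fin d → ℤ),
          (F (X s)).1 i =
            if h : ∃ j, j < m ∧ ∃ n ∈ N, i + n - v j ∈ K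
            then (F c).1 (i - v h.choose) else q := by
        intro s i
        by_cases hcase : ∃ j, j < m ∧ ∃ n ∈ N, i + n - v j ∈ K
        · rw [dif_pos hcase]
          obtain ⟨hjm, n0, hn0N, hn0K⟩ := hcase.choose_spec
          set j : ℕ := hcase.choose with hjdef
          have hval : (F (X s)).1 i = (F (w s j)).1 (i - v j) := by
            rw [hf, hf]
            congr 1
            funext n
            show (X s).1 (i + n.1) = (w s j).1 (i - v j + n.1)
            have hrw : i - v j + n.1 = i + n.1 - v j := by abel
            rw [hrw]
            by_cases hn : i + n.1 - v j ∈ K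
            · exact combo_apply hKfin (w s) hdisj0 hjm hn
            · have hnot : ¬ ∃ j', j' < m ∧ i + n.1 - v j' ∈ K := by
                rintro ⟨j', hj'm, hj'K⟩
                have hj'j : j' = j := hdisjN j' j i n.1 n0 n.2 hn0N hj'K hn0K
                rw [hj'j] at hj'K
                exact hn hj'K
              have hq : (w s j).1 (i + n.1 - v j) = q := by
                by_contra hq
                exact hn (hw s j hq)
              exact (combo_apply_q hKfin (w s) hnot).trans hq.symm
          rw [hval, hFw]
        · rw [dif_neg hcase, hf]
          have hXq : (fun n : N => (X s).1 (i + n.1)) = fun _ => q := by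
            funext n
            exact combo_apply_q hKfin (w s)
              (by rintro ⟨j, hjm, hjK⟩; exact hcase ⟨j, hjm, n.1, n.2, hjK⟩)
          rw [hXq, hfq]
      intro s s'
      apply Subtype.ext
      funext i
      rw [main s i, main s' i]
    -- members of the family with different choices below `m` are distinct
    have hdist : ∀ (s s' : ℕ → Bool) (j : ℕ), j < m → s j ≠ s' j → X s ≠ X s' := by
      intro s s' j hjm hss hXX
      have hmem : i0 + v j - v j ∈ K := by simpa using hi0K
      have h1 : (X s).1 (i0 + v j) = (w s j).1 i0 := by
        have h := combo_apply hKfin (w s) hdisj0 hjm hmem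
        rw [add_sub_cancel_right] at h
        exact h
      have h2 : (X s').1 (i0 + v j) = (w s' j).1 i0 := by
        have h := combo_apply hKfin (w s') hdisj0 hjm hmem
        rw [add_sub_cancel_right] at h
        exact h
      have h3 : (w s j).1 i0 ≠ (w s' j).1 i0 := by
        rcases Bool.eq_false_or_eq_true (s j) with h | h <;>
          rcases Bool.eq_false_or_eq_true (s' j) with h' | h' <;>
            simp only [hwdef, h, h', if_true, if_false] at hss ⊢
        · exact absurd rfl hss
        · exact Ne.symm hi0
        · exact hi0
        · exact absurd rfl hss
      rw [← h1, ← h2, hXX] at h3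
      exact h3 rfl
    -- the concrete family indexed by `Fin m`
    set cfg : Fin m → Cf d A q := fun t => X (fun j => decide (j = (t : ℕ))) with hcfgdef
    have hcfg_inj : Function.Injective cfg := by
      intro t t' htt
      by_contra hne'
      have hval : (t : ℕ) ≠ (t' : ℕ) := fun h => hne' (Fin.ext h)
      simp only [hcfgdef] at htt
      refine hdist _ _ (t : ℕ) t.2 ?_ htt
      simp [hval]
    have hcfg_img : ∀ t : Fin m, F (cfg t) = F (cfg ⟨0, hm⟩) := by
      intro t
      simp only [hcfgdef]
      exact himg _ _
    set z : Cf d A q := F (cfg ⟨0, hm⟩) with hzdef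
    -- the test vector
    set x : Hd d A q := ∑ t : Fin m, e (cfg t) with hxdef
    have hGx : G x = (m : ℂ) • e z := by
      rw [hxdef, map_sum]
      have : ∀ t : Fin m, G (e (cfg t)) = e z := by
        intro t; rw [hG, hcfg_img]
      rw [Finset.sum_congr rfl (fun t _ => this t), Finset.sum_const, Finset.card_univ,
        Fintype.card_fin]
      exact (Nat.cast_smul_eq_nsmul ℂ m (e z)).symm
    have hon : Orthonormal ℂ (fun t : Fin m => e (cfg t)) :=
      e_orthonormal.comp cfg hcfg_inj
    have hx2 : ‖x‖ ^ 2 = (m : ℝ) := by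
      have h1 : (inner ℂ x x : ℂ) = (m : ℂ) := by
        have hx' : x = ∑ t : Fin m, (1 : ℂ) • e (cfg t) := by
          simp [hxdef]
        rw [hx', hon.inner_sum]
        simp [Finset.card_univ]
      rw [← inner_self_eq_norm_sq (𝕜 := ℂ) x, h1]
      simp
    have hez : ‖e z‖ = 1 := e_orthonormal.1 z
    have hGxnorm : ‖G x‖ = (m : ℝ) := by
      rw [hGx, norm_smul, hez, mul_one]
      simp
    have hle : ‖G x‖ ≤ ‖G‖ * ‖x‖ := G.le_opNorm x
    have hm1 : (1 : ℝ) ≤ (m : ℝ) := by exact_mod_cast hm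
    have hxnn : (0 : ℝ) ≤ ‖x‖ := norm_nonneg x
    have hGnn : (0 : ℝ) ≤ ‖G‖ := norm_nonneg G
    nlinarith [hle, hx2, hGxnorm, hm1, hxnn, hGnn]
  obtain ⟨m, hmgt⟩ := exists_nat_gt (‖G‖ ^ 2)
  linarith [key m]

end
end

section
/- The map XOR_∞ : (ℤ → ZMod 2) → (ℤ → ZMod 2) defined by XOR_∞(x)(i) = x(i) + x(i+1) is an open map with respect to the product topology. -/
/-- the map `XOR_∞` on full configurations `ℤ → ZMod 2`, defined by
`XOR_∞(x)(i) = x(i) + x(i+1)`, is an open map for the product topology (`ZMod 2`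
being discrete). -/
theorem xor_infty_isOpenMap :
    letI : TopologicalSpace (ZMod 2) := ⊥
    IsOpenMap (fun (x : ℤ → ZMod 2) (i : ℤ) => x i + x (i + 1)) := by
  letI : TopologicalSpace (ZMod 2) := ⊥
  haveI : DiscreteTopology (ZMod 2) := ⟨rfl⟩
  set F : (ℤ → ZMod 2) → ℤ → ZMod 2 := fun x i => x i + x (i + 1) with hFdef
  set s : (ℤ → ZMod 2) → ℤ → ZMod 2 :=
    fun y n => ∑ i ∈ Finset.Ico (min n 0) (max n 0), y i with hsdef
  have two : ∀ a b : ZMod 2, a + (a + b) = b := by decide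
  have two' : ∀ a b : ZMod 2, b + (a + a) = b := by decide
  have key : ∀ (y : ℤ → ZMod 2) (i : ℤ), s y i + s y (i + 1) = y i := by
    intro y i
    rcases le_or_gt 0 i with h | h
    · simp only [hsdef]
      rw [min_eq_right h, max_eq_left h, min_eq_right (by omega), max_eq_left (by omega)]
      rw [show Finset.Ico (0:ℤ) (i+1) = insert i (Finset.Ico 0 i) by ext x; simp; omega,
          Finset.sum_insert (by simp), add_comm (y i), two]
    · simp only [hsdef]
      rw [min_eq_left h.le, max_eq_right h.le, min_eq_left (by omega), max_eq_right (by omega)]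
      rw [show Finset.Ico i (0:ℤ) = insert i (Finset.Ico (i+1) 0) by ext x; simp; omega,
          Finset.sum_insert (by simp), add_assoc, two']
  have hFs : ∀ y, F (s y) = y := fun y => funext fun i => key y i
  have hconst : ∀ g : ℤ → ZMod 2, (∀ i, g (i + 1) = g i) → ∀ i, g i = g 0 := by
    intro g hg i
    induction i using Int.induction_on with
    | zero => rfl
    | succ k ih => rw [hg k, ih]
    | pred k ih => rw [← ih, ← hg (-(k:ℤ) - 1)]; ring_nf
  have hfiber : ∀ x : ℤ → ZMod 2, x = s (F x) ∨ x = fun i => s (F x) i + 1 := by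
    intro x
    set y := F x with hy
    set g : ℤ → ZMod 2 := fun i => x i + s y i with hgdef
    have hg : ∀ i, g (i + 1) = g i := by
      intro i
      have h1 : x i + x (i + 1) = y i := rfl
      have h2 : s y i + s y (i + 1) = y i := key y i
      have : x (i + 1) + s y (i + 1) = x i + s y i := by
        have := h1.trans h2.symm
        -- in char two rearrange
        revert this
        generalize x i = a; generalize x (i+1) = b; generalize s y i = c
        generalize s y (i+1) = d
        revert a b c d; decide
      simpa [hgdef] using this
    have hc : ∀ i, g i = g 0 := hconst g hg
    have h01 : g 0 = 0 ∨ g 0 = 1 := by revert hgdef; generalize g 0 = a; revert a; intros a _; revert a; decide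
    rcases h01 with h | h
    · left
      funext i
      have := hc i; rw [h] at this
      have : x i + s y i = 0 := this
      revert this; generalize x i = a; generalize s y i = b; revert a b; decide
    · right
      funext i
      have := hc i; rw [h] at this
      have : x i + s y i = 1 := this
      revert this; generalize x i = a; generalize s y i = b; revert a b; decide
  have hcont_s : Continuous s := by
    apply continuous_pi; intro n
    exact continuous_finset_sum _ fun i _ => continuous_apply i
  have hcont_t : Continuous (fun y : ℤ → ZMod 2 => fun i => s y i + 1) := by
    apply continuous_pi; intro n
    exact ((continuous_apply n).comp hcont_s).add continuous_const
  intro U hU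
  have himg : F '' U = s ⁻¹' U ∪ (fun y : ℤ → ZMod 2 => fun i => s y i + 1) ⁻¹' U := by
    ext y
    constructor
    · rintro ⟨x, hx, rfl⟩
      rcases hfiber x with h | h
      · left; rwa [Set.mem_preimage, ← h]
      · right; rwa [Set.mem_preimage, ← h]
    · rintro (h | h)
      · exact ⟨s y, h, hFs y⟩
      · refine ⟨fun i => s y i + 1, h, ?_⟩
        funext i
        have h2 : s y i + s y (i + 1) = y i := key y i
        simp only [hFdef]
        revert h2; generalize s y i = a; generalize s y (i+1) = b
        generalize y i = c; revert a b c; decide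
  rw [himg]
  exact (hU.preimage hcont_s).union (hU.preimage hcont_t)
end
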